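/- arXiv:1405.2456 — 4 statements merged into one kernel-verified Lean document; each statement's English description precedes it below -/
import Mathlib

section
/- For u ≥ 1, r > 0, and δ > 0, the function F_{u,δ}(r²) = δ^{1-u/2} e^{-δ²/2} ∫_0^r x^{u/2} e^{-x²/2} I_{u/2-1}(δx) dx satisfies d/dδ F_{u,δ}(r²) = - r^{u/2} δ^{1-u/2} e^{-(r²+δ²)/2} I_{u/2}(rδ). -/
open Real Filter

/-- The modified Bessel function of the first kind of order `w`. -/
noncomputable def besselI (w x : ℝ) : ℝ :=
  ∑' m : ℕ, (x / 2) ^ (w + 2 * (m : ℝ)) / ((m.factorial : ℝ) * Real.Gamma ((m : ℝ) + w + 1))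

/-- The noncentral chi-square cdf at `r²` (as a function of the noncentrality `δ`),
`F_{u,δ}(r²) = δ^{1-u/2} e^{-δ²/2} ∫_0^r x^{u/2} e^{-x²/2} I_{u/2-1}(δx) dx`. -/
noncomputable def ncChiSqAtSq (u δ r : ℝ) : ℝ :=
  δ ^ (1 - u / 2) * Real.exp (-δ ^ 2 / 2) *
    ∫ x in (0:ℝ)..r, x ^ (u / 2) * Real.exp (-x ^ 2 / 2) * besselI (u / 2 - 1) (δ * x)

noncomputable def bg (w t : ℝ) : ℝ :=
  ∑' m : ℕ, t ^ m / ((m.factorial : ℝ) * Real.Gamma ((m : ℝ) + w + 1))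

lemma gamma_arg_pos {w : ℝ} (hw : -1 < w) (m : ℕ) : 0 < (m : ℝ) + w + 1 := by
  have : (0:ℝ) ≤ m := Nat.cast_nonneg m
  linarith

lemma gamma_pos {w : ℝ} (hw : -1 < w) (m : ℕ) : 0 < Real.Gamma ((m : ℝ) + w + 1) :=
  Real.Gamma_pos_of_pos (gamma_arg_pos hw m)

lemma denom_pos {w : ℝ} (hw : -1 < w) (m : ℕ) :
    0 < (m.factorial : ℝ) * Real.Gamma ((m : ℝ) + w + 1) :=
  mul_pos (by exact_mod_cast m.factorial_pos) (gamma_pos hw m)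

lemma summable_bg_aux {w : ℝ} (hw : -1 < w) {M : ℝ} (hM : 0 < M) :
    Summable (fun m : ℕ => M ^ m / ((m.factorial : ℝ) * Real.Gamma ((m : ℝ) + w + 1))) := by
  set f : ℕ → ℝ := fun m => M ^ m / ((m.factorial : ℝ) * Real.Gamma ((m : ℝ) + w + 1)) with hf
  have hfpos : ∀ m, 0 < f m := fun m => div_pos (pow_pos hM m) (denom_pos hw m)
  have key : ∀ m : ℕ, f (m + 1) = f m * (M / (((m:ℝ) + 1) * ((m:ℝ) + w + 1))) := by
    intro m
    have hG : Real.Gamma (((m+1 : ℕ) : ℝ) + w + 1)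
        = ((m:ℝ) + w + 1) * Real.Gamma ((m:ℝ) + w + 1) := by
      have := Real.Gamma_add_one (gamma_arg_pos hw m).ne'
      push_cast
      rw [show (m:ℝ) + 1 + w + 1 = ((m:ℝ) + w + 1) + 1 by ring, this]
    simp only [hf, hG, Nat.factorial_succ]
    push_cast
    have h1 : ((m.factorial : ℝ)) ≠ 0 := by exact_mod_cast m.factorial_pos.ne'
    have h2 : Real.Gamma ((m:ℝ) + w + 1) ≠ 0 := (gamma_pos hw m).ne'
    have h3 : ((m:ℝ) + 1) ≠ 0 := by positivity
    have h4 : ((m:ℝ) + w + 1) ≠ 0 := (gamma_arg_pos hw m).ne'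
    field_simp
    ring
  apply summable_of_ratio_test_tendsto_lt_one (l := 0) one_pos
  · exact Eventually.of_forall fun m => (hfpos m).ne'
  · have h1 : Tendsto (fun m : ℕ => (((m:ℝ) + 1) * ((m:ℝ) + w + 1))) atTop atTop := by
      apply Tendsto.atTop_mul_atTop₀
      · exact tendsto_atTop_add_const_right _ _ tendsto_natCast_atTop_atTop
      · exact tendsto_atTop_add_const_right _ _
          (tendsto_atTop_add_const_right _ _ tendsto_natCast_atTop_atTop)
    have h2 : Tendsto (fun m : ℕ => M / (((m:ℝ) + 1) * ((m:ℝ) + w + 1))) atTop (nhds 0) :=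
      Tendsto.div_atTop tendsto_const_nhds h1
    refine h2.congr fun m => ?_
    have hn : ‖f (m+1)‖ / ‖f m‖ = f (m+1) / f m := by
      rw [Real.norm_of_nonneg (hfpos _).le, Real.norm_of_nonneg (hfpos _).le]
    rw [hn, key m, mul_comm (f m), mul_div_assoc, div_self (hfpos m).ne', mul_one]

lemma summable_bg {w : ℝ} (hw : -1 < w) (t : ℝ) :
    Summable (fun m : ℕ => t ^ m / ((m.factorial : ℝ) * Real.Gamma ((m : ℝ) + w + 1))) := by
  apply Summable.of_norm_bounded (summable_bg_aux hw (M := |t| + 1) (by positivity))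
  intro m
  rw [norm_div, Real.norm_of_nonneg (denom_pos hw m).le, norm_pow]
  rw [div_le_div_iff_of_pos_right (denom_pos hw m)]
  exact pow_le_pow_left₀ (abs_nonneg t) (by linarith) m


lemma summable_bg_mul {w : ℝ} (hw : -1 < w) (t : ℝ) :
    Summable (fun m : ℕ => (m : ℝ) * t ^ m / ((m.factorial : ℝ) * Real.Gamma ((m : ℝ) + w + 1))) := by
  rw [← summable_nat_add_iff 1]
  have h : Summable (fun m : ℕ =>
      t * (t ^ m / ((m.factorial : ℝ) * Real.Gamma ((m : ℝ) + (w + 1) + 1)))) :=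
    (summable_bg (by linarith) t).mul_left t
  refine h.congr fun m => ?_
  have h1 : ((m.factorial : ℝ)) ≠ 0 := by exact_mod_cast m.factorial_pos.ne'
  have h2 : Real.Gamma ((m:ℝ) + (w+1) + 1) ≠ 0 := (gamma_pos (by linarith) m).ne'
  have hG : Real.Gamma (((m+1 : ℕ) : ℝ) + w + 1) = Real.Gamma ((m:ℝ) + (w+1) + 1) := by
    push_cast; ring_nf
  rw [hG, Nat.factorial_succ]
  push_cast
  field_simp
  ring

lemma bg_shift_sum {w : ℝ} (hw : -1 < w) (t : ℝ) :
    ∑' m : ℕ, (m : ℝ) * t ^ m / ((m.factorial : ℝ) * Real.Gamma ((m : ℝ) + w + 1))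
      = t * bg (w + 1) t := by
  rw [Summable.tsum_eq_zero_add (summable_bg_mul hw t)]
  simp only [Nat.cast_zero, zero_mul, zero_div, zero_add]
  rw [bg, ← tsum_mul_left]
  refine tsum_congr fun m => ?_
  have h1 : ((m.factorial : ℝ)) ≠ 0 := by exact_mod_cast m.factorial_pos.ne'
  have h2 : Real.Gamma ((m:ℝ) + (w+1) + 1) ≠ 0 := (gamma_pos (by linarith) m).ne'
  have hG : Real.Gamma (((m+1 : ℕ) : ℝ) + w + 1) = Real.Gamma ((m:ℝ) + (w+1) + 1) := by
    push_cast; ring_nf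
  rw [hG, Nat.factorial_succ]
  push_cast
  field_simp
  ring

lemma hasDerivAt_bg {w : ℝ} (hw : -1 < w) (t : ℝ) :
    HasDerivAt (bg w) (bg (w + 1) t) t := by
  set c : ℕ → ℝ := fun m => (m.factorial : ℝ) * Real.Gamma ((m : ℝ) + w + 1) with hc
  set R : ℝ := |t| + 1 with hR
  have hR1 : (1:ℝ) ≤ R := by
    have := abs_nonneg t; simp only [hR]; linarith
  have hRpos : (0:ℝ) < R := by linarith
  have htmem : t ∈ Set.Ioo (-R) R := by
    constructor
    · nlinarith [neg_abs_le t]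
    · nlinarith [le_abs_self t]
  have hbound : ∀ (m : ℕ) (y : ℝ), y ∈ Set.Ioo (-R) R →
      ‖(m:ℝ) * y ^ (m - 1) / c m‖ ≤ (m:ℝ) * R ^ m / c m := by
    intro m y hy
    have hy' : |y| ≤ R := by
      rw [abs_le]; exact ⟨hy.1.le, hy.2.le⟩
    have h1 : |y| ^ (m-1) ≤ R ^ (m-1) := pow_le_pow_left₀ (abs_nonneg y) hy' _
    have h2 : R ^ (m-1) ≤ R ^ m := pow_le_pow_right₀ hR1 (Nat.sub_le m 1)
    rw [norm_div, Real.norm_of_nonneg (denom_pos hw m).le, norm_mul,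
      Real.norm_natCast, norm_pow, Real.norm_eq_abs]
    have : (m:ℝ) * |y| ^ (m-1) ≤ (m:ℝ) * R ^ m :=
      mul_le_mul_of_nonneg_left (h1.trans h2) (Nat.cast_nonneg m)
    exact (div_le_div_iff_of_pos_right (denom_pos hw m)).mpr this
  have hmain := hasDerivAt_tsum_of_isPreconnected
    (𝕜 := ℝ) (F := ℝ)
    (u := fun m : ℕ => (m : ℝ) * R ^ m / c m)
    (g := fun (m : ℕ) (y : ℝ) => y ^ m / c m)
    (g' := fun (m : ℕ) (y : ℝ) => (m : ℝ) * y ^ (m - 1) / c m)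
    (summable_bg_mul hw R) isOpen_Ioo (convex_Ioo _ _).isPreconnected
    (fun m y _ => (hasDerivAt_pow m y).div_const (c m))
    hbound htmem (summable_bg hw t) htmem
  have heq : (∑' m : ℕ, (m : ℝ) * t ^ (m - 1) / c m) = bg (w + 1) t := by
    have hsum : Summable (fun m : ℕ => (m : ℝ) * t ^ (m - 1) / c m) := by
      apply Summable.of_norm_bounded (summable_bg_mul hw R)
      intro m; exact hbound m t htmem
    rw [Summable.tsum_eq_zero_add hsum]
    simp only [Nat.cast_zero, zero_mul, zero_div, zero_add]
    rw [bg]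
    refine tsum_congr fun m => ?_
    have h1 : ((m.factorial : ℝ)) ≠ 0 := by exact_mod_cast m.factorial_pos.ne'
    have h2 : Real.Gamma ((m:ℝ) + (w+1) + 1) ≠ 0 := (gamma_pos (by linarith) m).ne'
    have hG : Real.Gamma (((m+1 : ℕ) : ℝ) + w + 1) = Real.Gamma ((m:ℝ) + (w+1) + 1) := by
      push_cast; ring_nf
    simp only [hc, hG, Nat.factorial_succ, Nat.add_sub_cancel]
    push_cast
    field_simp
  rw [← heq]
  exact hmain

lemma bg_rec {w : ℝ} (hw : 0 < w) (t : ℝ) :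
    bg (w - 1) t = w * bg w t + t * bg (w + 1) t := by
  have hw' : -1 < w := by linarith
  have hterm : ∀ m : ℕ, t ^ m / ((m.factorial : ℝ) * Real.Gamma ((m : ℝ) + (w - 1) + 1))
      = w * (t ^ m / ((m.factorial : ℝ) * Real.Gamma ((m : ℝ) + w + 1)))
        + (m : ℝ) * t ^ m / ((m.factorial : ℝ) * Real.Gamma ((m : ℝ) + w + 1)) := by
    intro m
    have harg : (0:ℝ) < (m:ℝ) + w := by
      have : (0:ℝ) ≤ m := Nat.cast_nonneg m
      linarith
    have hG : Real.Gamma ((m:ℝ) + w + 1) = ((m:ℝ) + w) * Real.Gamma ((m:ℝ) + w) := by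
      rw [show (m:ℝ) + w + 1 = ((m:ℝ) + w) + 1 by ring, Real.Gamma_add_one harg.ne']
    have h1 : ((m.factorial : ℝ)) ≠ 0 := by exact_mod_cast m.factorial_pos.ne'
    have h2 : Real.Gamma ((m:ℝ) + w) ≠ 0 := (Real.Gamma_pos_of_pos harg).ne'
    rw [show (m:ℝ) + (w - 1) + 1 = (m:ℝ) + w by ring, hG]
    field_simp
    ring
  rw [bg, tsum_congr hterm, Summable.tsum_add ((summable_bg hw' t).mul_left w) (summable_bg_mul hw' t),
    tsum_mul_left, bg_shift_sum hw' t, bg, bg]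


lemma bg_nonneg {w : ℝ} (hw : -1 < w) {t : ℝ} (ht : 0 ≤ t) : 0 ≤ bg w t :=
  tsum_nonneg fun m => div_nonneg (pow_nonneg ht m) (denom_pos hw m).le

lemma bg_mono {w : ℝ} (hw : -1 < w) {t T : ℝ} (ht : 0 ≤ t) (hT : t ≤ T) :
    bg w t ≤ bg w T := by
  apply Summable.tsum_le_tsum ?_ (summable_bg hw t) (summable_bg hw T)
  intro m
  exact (div_le_div_iff_of_pos_right (denom_pos hw m)).mpr (pow_le_pow_left₀ ht hT m)

lemma bg_abs_le {w : ℝ} (hw : -1 < w) (t : ℝ) : |bg w t| ≤ bg w |t| := by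
  have h := norm_tsum_le_tsum_norm (f := fun m : ℕ =>
    t ^ m / ((m.factorial : ℝ) * Real.Gamma ((m : ℝ) + w + 1))) ?_
  · rw [Real.norm_eq_abs] at h
    refine h.trans_eq (tsum_congr fun m => ?_)
    rw [norm_div, Real.norm_of_nonneg (denom_pos hw m).le, norm_pow, Real.norm_eq_abs]
  · apply Summable.congr (summable_bg hw |t|)
    intro m
    rw [norm_div, Real.norm_of_nonneg (denom_pos hw m).le, norm_pow, Real.norm_eq_abs]

lemma continuous_bg {w : ℝ} (hw : -1 < w) : Continuous (bg w) := by
  have : Differentiable ℝ (bg w) := fun t => (hasDerivAt_bg hw t).differentiableAt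
  exact this.continuous

lemma besselI_eq {w y : ℝ} (hy : 0 < y) :
    besselI w y = (y / 2) ^ w * bg w (y ^ 2 / 4) := by
  rw [besselI, bg, ← tsum_mul_left]
  refine tsum_congr fun m => ?_
  have hy2 : (0:ℝ) < y / 2 := by linarith
  have key : (y / 2) ^ (w + 2 * (m : ℝ)) = (y / 2) ^ w * (y ^ 2 / 4) ^ m := by
    rw [Real.rpow_add hy2, show (2 * (m:ℝ)) = ((2 * m : ℕ) : ℝ) by push_cast; ring,
      Real.rpow_natCast, pow_mul]
    congr 2
    ring
  rw [key, mul_div_assoc]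

lemma my_continuous_rpow_const {c : ℝ} (hc : 0 ≤ c) : Continuous fun x : ℝ => x ^ c :=
  continuous_iff_continuousAt.mpr fun x => Real.continuousAt_rpow_const x c (Or.inr hc)

/-- Integrand of `K`. -/
noncomputable def KI (u T x : ℝ) : ℝ :=
  x ^ (u - 1) * Real.exp (-x ^ 2 / 2) * bg (u / 2 - 1) (T * (x ^ 2 / 4))

/-- Integrand of `K'`. -/
noncomputable def KI' (u T x : ℝ) : ℝ :=
  x ^ (u - 1) * Real.exp (-x ^ 2 / 2) * (bg (u / 2 - 1 + 1) (T * (x ^ 2 / 4)) * (x ^ 2 / 4))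

noncomputable def Kfun (u r T : ℝ) : ℝ := ∫ x in (0:ℝ)..r, KI u T x

noncomputable def Kfun' (u r T : ℝ) : ℝ := ∫ x in (0:ℝ)..r, KI' u T x

lemma continuous_KI {u : ℝ} (hu : 1 ≤ u) (T : ℝ) : Continuous (KI u T) := by
  have hν : (-1:ℝ) < u / 2 - 1 := by linarith
  apply Continuous.mul
  · exact (my_continuous_rpow_const (by linarith)).mul (Real.continuous_exp.comp (by continuity))
  · exact (continuous_bg hν).comp (by continuity)

lemma continuous_KI' {u : ℝ} (hu : 1 ≤ u) (T : ℝ) : Continuous (KI' u T) := by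
  have hν : (-1:ℝ) < u / 2 - 1 + 1 := by linarith
  apply Continuous.mul
  · exact (my_continuous_rpow_const (by linarith)).mul (Real.continuous_exp.comp (by continuity))
  · exact ((continuous_bg hν).comp (by continuity)).mul (by continuity)

lemma hasDerivAt_K {u r : ℝ} (hu : 1 ≤ u) (hr : 0 < r) (s₀ : ℝ) :
    HasDerivAt (fun s => Kfun u r s) (Kfun' u r s₀) s₀ := by
  have hν : (-1:ℝ) < u / 2 - 1 := by linarith
  have hμ : (-1:ℝ) < u / 2 - 1 + 1 := by linarith
  have hIoc : Set.uIoc (0:ℝ) r = Set.Ioc 0 r := Set.uIoc_of_le hr.le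
  have hB0 : (0:ℝ) ≤ (|s₀| + 1) * (r ^ 2 / 4) := by positivity
  have key := intervalIntegral.hasDerivAt_integral_of_dominated_loc_of_deriv_le
    (F := fun s x => KI u s x) (F' := fun s x => KI' u s x) (x₀ := s₀)
    (a := (0:ℝ)) (b := r) (s := Metric.ball s₀ 1) (μ := MeasureTheory.volume)
    (bound := fun _ => r ^ (u-1) * 1 * (bg (u/2-1+1) ((|s₀|+1) * (r^2/4)) * (r^2/4)))
    (Metric.ball_mem_nhds _ one_pos)
    (Filter.Eventually.of_forall fun s => (continuous_KI hu s).aestronglyMeasurable.restrict)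
    ((continuous_KI hu s₀).intervalIntegrable _ _)
    (continuous_KI' hu s₀).aestronglyMeasurable.restrict
    ?_ (intervalIntegrable_const) ?_
  · exact key.2
  · -- bound
    refine Filter.Eventually.of_forall fun x hx s hs => ?_
    rw [hIoc] at hx
    obtain ⟨hx0, hxr⟩ := hx
    have hs' : |s| ≤ |s₀| + 1 := by
      have := mem_ball_iff_norm.mp hs
      have h2 := abs_sub_abs_le_abs_sub s s₀
      rw [Real.norm_eq_abs] at this
      linarith
    have e1 : |x ^ (u-1)| ≤ r ^ (u-1) := by
      rw [abs_of_nonneg (Real.rpow_nonneg hx0.le _)]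
      exact Real.rpow_le_rpow hx0.le hxr (by linarith)
    have e2 : |Real.exp (-x^2/2)| ≤ 1 := by
      rw [abs_of_nonneg (Real.exp_nonneg _)]
      apply Real.exp_le_one_iff.mpr
      nlinarith [sq_nonneg x]
    have e3 : |bg (u/2-1+1) (s * (x^2/4)) * (x^2/4)|
        ≤ bg (u/2-1+1) ((|s₀|+1) * (r^2/4)) * (r^2/4) := by
      rw [abs_mul]
      have h4 : |s * (x^2/4)| ≤ (|s₀|+1) * (r^2/4) := by
        rw [abs_mul]
        apply mul_le_mul hs' ?_ (abs_nonneg _) (by positivity)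
        rw [abs_of_nonneg (by positivity)]
        nlinarith
      have h5 : |bg (u/2-1+1) (s * (x^2/4))| ≤ bg (u/2-1+1) ((|s₀|+1) * (r^2/4)) :=
        (bg_abs_le hμ _).trans (bg_mono hμ (abs_nonneg _) h4)
      apply mul_le_mul h5 ?_ (abs_nonneg _) (bg_nonneg hμ hB0)
      rw [abs_of_nonneg (by positivity)]
      nlinarith
    show ‖KI' u s x‖ ≤ _
    rw [KI', Real.norm_eq_abs, abs_mul, abs_mul]
    apply mul_le_mul (mul_le_mul e1 e2 (abs_nonneg _) (Real.rpow_nonneg hr.le _)) e3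
      (abs_nonneg _) (by positivity)
  · -- differentiability in s
    refine Filter.Eventually.of_forall fun x _ s _ => ?_
    have hinner : HasDerivAt (fun s : ℝ => s * (x^2/4)) (x^2/4) s := hasDerivAt_mul_const _
    have h := ((hasDerivAt_bg hν (s * (x^2/4))).comp s hinner).const_mul
      (x ^ (u-1) * Real.exp (-x^2/2))
    simpa [KI, KI', mul_assoc] using h


lemma intervalIntegral_congr_Ioc {f g : ℝ → ℝ} {r : ℝ} (hr : 0 ≤ r)
    (h : ∀ x ∈ Set.Ioc (0:ℝ) r, f x = g x) :
    ∫ x in (0:ℝ)..r, f x = ∫ x in (0:ℝ)..r, g x := by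
  rw [intervalIntegral.integral_of_le hr, intervalIntegral.integral_of_le hr]
  exact MeasureTheory.setIntegral_congr_fun measurableSet_Ioc h

lemma ftc_key {u r : ℝ} (T : ℝ) (hu : 1 ≤ u) (hr : 0 < r) :
    ∫ x in (0:ℝ)..r, (2 * KI' u T x - KI u T x)
      = -(1/2) * (r ^ u * Real.exp (-r ^ 2 / 2) * bg (u/2) (T * (r ^ 2 / 4))) := by
  have hμ : (-1:ℝ) < u / 2 := by linarith
  have hμpos : (0:ℝ) < u / 2 := by linarith
  set ψd : ℝ → ℝ := fun x =>
    u * x ^ (u - 1) * (Real.exp (-x ^ 2 / 2) * bg (u/2) (T * (x ^ 2 / 4)))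
    + x ^ u * ((Real.exp (-x ^ 2 / 2) * (-(2 * x ^ 1) / 2)) * bg (u/2) (T * (x ^ 2 / 4))
        + Real.exp (-x ^ 2 / 2) * (bg (u/2 + 1) (T * (x ^ 2 / 4)) * (T * (2 * x ^ 1 / 4)))) with hψd
  set Ψ : ℝ → ℝ := fun x => x ^ u * (Real.exp (-x ^ 2 / 2) * bg (u/2) (T * (x ^ 2 / 4))) with hΨ
  have hcontΨ : Continuous Ψ := by
    apply (my_continuous_rpow_const (by linarith)).mul
    exact (Real.continuous_exp.comp (by continuity)).mul ((continuous_bg hμ).comp (by continuity))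
  have hcontψd : Continuous ψd := by
    apply Continuous.add
    · apply (continuous_const.mul (my_continuous_rpow_const (by linarith))).mul
      exact (Real.continuous_exp.comp (by continuity)).mul ((continuous_bg hμ).comp (by continuity))
    · apply (my_continuous_rpow_const (by linarith)).mul
      apply Continuous.add
      · exact ((Real.continuous_exp.comp (by continuity)).mul (by continuity)).mul
          ((continuous_bg hμ).comp (by continuity))
      · exact (Real.continuous_exp.comp (by continuity)).mul
          (((continuous_bg (by linarith)).comp (by continuity)).mul (by continuity))
  have hderiv : ∀ x ∈ Set.Ioo (0:ℝ) r, HasDerivAt Ψ (ψd x) x := by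
    intro x hx
    have h1 : HasDerivAt (fun x : ℝ => x ^ u) (u * x ^ (u - 1)) x :=
      Real.hasDerivAt_rpow_const (Or.inl hx.1.ne')
    have h2 : HasDerivAt (fun x : ℝ => Real.exp (-x ^ 2 / 2))
        (Real.exp (-x ^ 2 / 2) * (-(2 * x ^ 1) / 2)) x := by
      have := ((hasDerivAt_pow 2 x).neg.div_const 2).exp
      simpa using this
    have hinner : HasDerivAt (fun x : ℝ => T * (x ^ 2 / 4)) (T * (2 * x ^ 1 / 4)) x := by
      have := ((hasDerivAt_pow 2 x).div_const 4).const_mul T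
      simpa using this
    have h3 : HasDerivAt (fun x : ℝ => bg (u/2) (T * (x ^ 2 / 4)))
        (bg (u/2 + 1) (T * (x ^ 2 / 4)) * (T * (2 * x ^ 1 / 4))) x :=
      by have := (hasDerivAt_bg hμ _).comp x hinner; exact this
    exact h1.mul (h2.mul h3)
  have hftc : ∫ x in (0:ℝ)..r, ψd x = Ψ r - Ψ 0 := by
    apply intervalIntegral.integral_eq_sub_of_hasDeriv_right_of_le hr.le
      hcontΨ.continuousOn (fun x hx => (hderiv x hx).hasDerivWithinAt)
      (hcontψd.intervalIntegrable _ _)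
  have hcongr : ∫ x in (0:ℝ)..r, (2 * KI' u T x - KI u T x)
      = ∫ x in (0:ℝ)..r, -(1/2) * ψd x := by
    apply intervalIntegral_congr_Ioc hr.le
    intro x hx
    have hxu : x ^ u = x ^ (u - 1) * x := by
      rw [show u = u - 1 + 1 by ring, Real.rpow_add_one hx.1.ne']
      ring_nf
    have hrec : bg (u/2 - 1) (T * (x ^ 2 / 4))
        = u/2 * bg (u/2) (T * (x ^ 2 / 4)) + (T * (x ^ 2 / 4)) * bg (u/2 + 1) (T * (x ^ 2 / 4)) :=
      bg_rec hμpos _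
    rw [KI, KI', show u/2 - 1 + 1 = u/2 by ring, hrec, hψd]
    beta_reduce
    rw [hxu]
    ring
  have hΨ0 : Ψ 0 = 0 := by
    rw [hΨ]
    simp [Real.zero_rpow (by linarith : u ≠ 0)]
  rw [hcongr, intervalIntegral.integral_const_mul, hftc, hΨ0, hΨ]
  ring

lemma rpow_half_split {a b : ℝ} (ha : 0 < a) (hb : 0 < b) (w : ℝ) :
    (a * b / 2) ^ w = a ^ w * b ^ w * 2 ^ (-w) := by
  rw [show a * b / 2 = a * b * (2:ℝ)⁻¹ by ring, Real.mul_rpow (by positivity) (by positivity),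
    Real.mul_rpow ha.le hb.le, Real.inv_rpow (by norm_num), ← Real.rpow_neg (by norm_num)]

lemma ncChiSq_eq {u r : ℝ} (d : ℝ) (hu : 1 ≤ u) (hr : 0 < r) (hd : 0 < d) :
    ncChiSqAtSq u d r = 2 ^ (1 - u/2) * (Real.exp (-d ^ 2 / 2) * Kfun u r (d ^ 2)) := by
  rw [ncChiSqAtSq]
  have hint : ∫ x in (0:ℝ)..r, x ^ (u / 2) * Real.exp (-x ^ 2 / 2) * besselI (u / 2 - 1) (d * x)
      = ∫ x in (0:ℝ)..r, (d ^ (u/2 - 1) * 2 ^ (1 - u/2)) * KI u (d ^ 2) x := by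
    apply intervalIntegral_congr_Ioc hr.le
    intro x hx
    have hx0 : 0 < x := hx.1
    have hdx : 0 < d * x := mul_pos hd hx0
    have p1 : besselI (u/2 - 1) (d * x)
        = d ^ (u/2-1) * x ^ (u/2-1) * 2 ^ (-(u/2-1))
          * bg (u/2-1) (d ^ 2 * (x ^ 2 / 4)) := by
      rw [besselI_eq hdx, rpow_half_split hd hx0, show (d*x)^2/4 = d^2 * (x^2/4) by ring]
    have p2 : x ^ (u/2) * x ^ (u/2-1) = x ^ (u-1) := by
      rw [← Real.rpow_add hx0]
      ring_nf
    have p3 : (2:ℝ) ^ (-(u/2-1)) = 2 ^ (1-u/2) := by ring_nf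
    rw [KI, p1, p3, ← p2]
    ring
  rw [hint, intervalIntegral.integral_const_mul]
  have q : d ^ (1 - u/2) * d ^ (u/2 - 1) = 1 := by
    rw [← Real.rpow_add hd, show (1-u/2) + (u/2-1) = 0 by ring, Real.rpow_zero]
  rw [Kfun]
  linear_combination (Real.exp (-d^2/2) * 2 ^ (1-u/2) *
    ∫ x in (0:ℝ)..r, KI u (d ^ 2) x) * q

/-- For `u ≥ 1`, `r > 0`, `δ > 0`,
`d/dδ F_{u,δ}(r²) = - r^{u/2} δ^{1-u/2} e^{-(r²+δ²)/2} I_{u/2}(rδ)`. -/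
theorem deriv_ncChiSqAtSq (u r δ : ℝ) (hu : 1 ≤ u) (hr : 0 < r) (hδ : 0 < δ) :
    HasDerivAt (fun d => ncChiSqAtSq u d r)
      (-(r ^ (u / 2) * δ ^ (1 - u / 2) * Real.exp (-(r ^ 2 + δ ^ 2) / 2) *
        besselI (u / 2) (r * δ))) δ := by
  have hμ : (-1:ℝ) < u / 2 := by linarith
  have hd2 : HasDerivAt (fun d : ℝ => d ^ 2) (2 * δ) δ := by
    simpa using hasDerivAt_pow 2 δ
  have hK : HasDerivAt (fun d : ℝ => Kfun u r (d ^ 2)) (Kfun' u r (δ ^ 2) * (2 * δ)) δ :=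
    by have := (hasDerivAt_K hu hr (δ ^ 2)).comp δ hd2; exact this
  have hexp : HasDerivAt (fun d : ℝ => Real.exp (-d ^ 2 / 2))
      (Real.exp (-δ ^ 2 / 2) * (-(2 * δ ^ 1) / 2)) δ := by
    have := ((hasDerivAt_pow 2 δ).neg.div_const 2).exp
    simpa using this
  have hG : HasDerivAt (fun d => 2 ^ (1 - u/2) * (Real.exp (-d ^ 2 / 2) * Kfun u r (d ^ 2)))
      (2 ^ (1 - u/2) * (Real.exp (-δ ^ 2 / 2) * (-(2 * δ ^ 1) / 2) * Kfun u r (δ ^ 2)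
        + Real.exp (-δ ^ 2 / 2) * (Kfun' u r (δ ^ 2) * (2 * δ)))) δ :=
    (hexp.mul hK).const_mul _
  have heq : (fun d => ncChiSqAtSq u d r)
      =ᶠ[nhds δ] fun d => 2 ^ (1 - u/2) * (Real.exp (-d ^ 2 / 2) * Kfun u r (d ^ 2)) := by
    filter_upwards [Ioi_mem_nhds hδ] with d hd
    exact ncChiSq_eq d hu hr hd
  have hmain := hG.congr_of_eventuallyEq heq
  -- now identify the derivative value
  have key1 : 2 * Kfun' u r (δ ^ 2) - Kfun u r (δ ^ 2)
      = -(1/2) * (r ^ u * Real.exp (-r ^ 2 / 2) * bg (u/2) (δ ^ 2 * (r ^ 2 / 4))) := by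
    rw [← ftc_key (δ ^ 2) hu hr, Kfun, Kfun', ← intervalIntegral.integral_const_mul,
      ← intervalIntegral.integral_sub]
    · exact ((continuous_const.mul (continuous_KI' hu _)).intervalIntegrable _ _)
    · exact ((continuous_KI hu _).intervalIntegrable _ _)
  have key2 : besselI (u/2) (r * δ)
      = r ^ (u/2) * δ ^ (u/2) * 2 ^ (-(u/2)) * bg (u/2) (δ ^ 2 * (r ^ 2 / 4)) := by
    rw [besselI_eq (mul_pos hr hδ), rpow_half_split hr hδ,
      show (r*δ)^2/4 = δ^2 * (r^2/4) by ring]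
  have key4 : r ^ (u/2) * r ^ (u/2) = r ^ u := by
    rw [← Real.rpow_add hr]; ring_nf
  have keyδ : δ ^ (1 - u/2) * δ ^ (u/2) = δ := by
    rw [← Real.rpow_add hδ, show (1-u/2) + u/2 = 1 by ring, Real.rpow_one]
  have key5 : Real.exp (-(r ^ 2 + δ ^ 2) / 2) = Real.exp (-δ ^ 2 / 2) * Real.exp (-r ^ 2 / 2) := by
    rw [← Real.exp_add]; ring_nf
  have key6 : (2:ℝ) ^ (1 - u/2) = 2 * 2 ^ (-(u/2)) := by
    rw [show (1 - u/2) = 1 + -(u/2) by ring, Real.rpow_add two_pos, Real.rpow_one]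
  have hval : 2 ^ (1 - u/2) * (Real.exp (-δ ^ 2 / 2) * (-(2 * δ ^ 1) / 2) * Kfun u r (δ ^ 2)
        + Real.exp (-δ ^ 2 / 2) * (Kfun' u r (δ ^ 2) * (2 * δ)))
      = -(r ^ (u / 2) * δ ^ (1 - u / 2) * Real.exp (-(r ^ 2 + δ ^ 2) / 2) *
        besselI (u / 2) (r * δ)) := by
    rw [key2, key5, key6]
    linear_combination (2 * (2:ℝ)^(-(u/2)) * Real.exp (-δ^2/2) * δ) * key1
      + (δ^(1-u/2) * δ^(u/2) * Real.exp (-δ^2/2) * Real.exp (-r^2/2) * (2:ℝ)^(-(u/2))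
          * bg (u/2) (δ^2*(r^2/4))) * key4
      + (r^u * Real.exp (-δ^2/2) * Real.exp (-r^2/2) * (2:ℝ)^(-(u/2))
          * bg (u/2) (δ^2*(r^2/4))) * keyδ
  rw [hval] at hmain
  exact hmain
end

section
/- For fixed u ≥ 1 and r > 0, the noncentral chi-square cdf value F_{u,δ}(r²) is a strictly decreasing function of the noncentrality parameter δ on (0, ∞). -/
open Real MeasureTheory Filter Set Finset intervalIntegral

noncomputable def Iv (r v : ℝ) : ℝ := ∫ x in (0:ℝ)..r, x ^ v * Real.exp (-x^2/2)

lemma contOn_aux {v : ℝ} (hv : 0 ≤ v) (s : Set ℝ) :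
    ContinuousOn (fun x : ℝ => x ^ v * Real.exp (-x^2/2)) s := by
  apply ContinuousOn.mul
  · exact continuousOn_id.rpow_const (fun x _ => Or.inr hv)
  · exact (Real.continuous_exp.comp (by continuity)).continuousOn

lemma Iv_intble {r v : ℝ} (hv : 0 ≤ v) :
    IntervalIntegrable (fun x : ℝ => x ^ v * Real.exp (-x^2/2)) volume 0 r :=
  (contOn_aux hv _).intervalIntegrable

lemma Iv_pos {r v : ℝ} (hr : 0 < r) (hv : 0 ≤ v) : 0 < Iv r v := by
  apply intervalIntegral_pos_of_pos_on (Iv_intble hv)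
  · intro x hx
    exact mul_pos (Real.rpow_pos_of_pos hx.1 v) (Real.exp_pos _)
  · exact hr

lemma Iv_ibp {r p : ℝ} (hr : 0 < r) (hp : 1 ≤ p) :
    Iv r (p + 1) = p * Iv r (p - 1) - r ^ p * Real.exp (-r^2/2) := by
  have hderiv : ∀ x ∈ Set.uIcc (0:ℝ) r,
      HasDerivAt (fun y : ℝ => y ^ p * Real.exp (-y^2/2))
        (p * (x ^ (p-1) * Real.exp (-x^2/2)) - x ^ (p+1) * Real.exp (-x^2/2)) x := by
    intro x _
    have h1 : HasDerivAt (fun y : ℝ => y ^ p) (p * x ^ (p-1)) x :=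
      Real.hasDerivAt_rpow_const (Or.inr hp)
    have h2 : HasDerivAt (fun y : ℝ => -y^2/2) (-x) x := by
      have hsq : HasDerivAt (fun y : ℝ => y^2) (2*x) x := by
        simpa using hasDerivAt_pow 2 x
      have h := (hsq.neg).div_const 2
      exact h.congr_deriv (by ring)
    have h3 : HasDerivAt (fun y : ℝ => Real.exp (-y^2/2)) (Real.exp (-x^2/2) * (-x)) x :=
      h2.exp
    have := h1.mul h3
    refine this.congr_deriv ?_
    rcases eq_or_ne x 0 with hx | hx
    · subst hx
      have hp0 : p ≠ 0 := by linarith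
      have hp1 : p + 1 ≠ 0 := by linarith
      simp [Real.zero_rpow hp0, Real.zero_rpow hp1]
    · have : x ^ (p + 1) = x ^ p * x := by
        rw [Real.rpow_add_one hx]
      rw [this]; ring
  have hFTC := intervalIntegral.integral_eq_sub_of_hasDerivAt hderiv ?_
  · have hsplit : (∫ x in (0:ℝ)..r,
        (p * (x ^ (p-1) * Real.exp (-x^2/2)) - x ^ (p+1) * Real.exp (-x^2/2)))
        = p * Iv r (p-1) - Iv r (p+1) := by
      rw [intervalIntegral.integral_sub ((Iv_intble (by linarith)).const_mul p)
        (Iv_intble (by linarith)), intervalIntegral.integral_const_mul]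
      rfl
    rw [hsplit] at hFTC
    have h0 : (0:ℝ) ^ p * Real.exp (-(0:ℝ)^2/2) = 0 := by
      rw [Real.zero_rpow (by linarith : p ≠ 0)]; ring
    rw [h0, sub_zero] at hFTC
    linarith
  · apply IntervalIntegrable.sub ((Iv_intble (by linarith)).const_mul p)
      (Iv_intble (by linarith))

noncomputable def Acoef (u r : ℝ) (m : ℕ) : ℝ :=
  2 ^ (1 - u/2 - m : ℝ) * Iv r (u - 1 + 2*m) / Real.Gamma (m + u/2)

lemma Acoef_pos {u r : ℝ} (hu : 1 ≤ u) (hr : 0 < r) (m : ℕ) : 0 < Acoef u r m := by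
  apply div_pos
  · apply mul_pos (Real.rpow_pos_of_pos two_pos _)
    apply Iv_pos hr
    have : (0:ℝ) ≤ m := Nat.cast_nonneg m
    linarith
  · apply Real.Gamma_pos_of_pos
    have : (0:ℝ) ≤ m := Nat.cast_nonneg m
    linarith

lemma Acoef_anti {u r : ℝ} (hu : 1 ≤ u) (hr : 0 < r) : StrictAnti (Acoef u r) := by
  apply strictAnti_nat_of_succ_lt
  intro m
  have hm0 : (0:ℝ) ≤ m := Nat.cast_nonneg m
  have hγ : 0 < Real.Gamma (m + u/2) := Real.Gamma_pos_of_pos (by linarith)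
  have hGamma : Real.Gamma ((m+1 : ℕ) + u/2) = (m + u/2) * Real.Gamma (m + u/2) := by
    have : ((m+1 : ℕ) : ℝ) + u/2 = (m + u/2) + 1 := by push_cast; ring
    rw [this, Real.Gamma_add_one (by positivity : (m:ℝ) + u/2 ≠ 0)]
  have hIv : Iv r (u - 1 + 2*(m+1 : ℕ)) = (u + 2*m) * Iv r (u - 1 + 2*m)
      - r ^ (u + 2*m) * Real.exp (-r^2/2) := by
    have h1 : (u - 1 + 2*((m:ℕ)+1 : ℕ) : ℝ) = (u + 2*m) + 1 := by push_cast; ring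
    have h2 : (u + 2*(m:ℝ)) - 1 = u - 1 + 2*m := by ring
    rw [h1, Iv_ibp hr (by linarith), h2]
  have hpow : (2:ℝ) ^ (1 - u/2 - ((m:ℕ)+1 : ℕ) : ℝ) = 2 ^ (1 - u/2 - m : ℝ) / 2 := by
    have : (1 - u/2 - ((m:ℕ)+1 : ℕ) : ℝ) = (1 - u/2 - m) - 1 := by push_cast; ring
    rw [this, Real.rpow_sub two_pos, Real.rpow_one]
  have hI : 0 < Iv r (u - 1 + 2*m) := Iv_pos hr (by linarith)
  have hrp : 0 < r ^ (u + 2*m) * Real.exp (-r^2/2) :=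
    mul_pos (Real.rpow_pos_of_pos hr _) (Real.exp_pos _)
  have h2A : 0 < (2:ℝ) ^ (1 - u/2 - m : ℝ) := Real.rpow_pos_of_pos two_pos _
  unfold Acoef
  rw [hGamma, hIv, hpow]
  rw [div_lt_div_iff₀ (by positivity) hγ]
  have hkey : (u + 2*m) = 2 * (m + u/2) := by ring
  nlinarith [mul_pos h2A hrp, mul_pos hγ (mul_pos h2A hrp)]

noncomputable def pois (lam : ℝ) (m : ℕ) : ℝ := Real.exp (-lam) * (lam ^ m / m.factorial)

noncomputable def poisCdf (k : ℕ) (lam : ℝ) : ℝ := ∑ m ∈ Finset.range (k+1), pois lam m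

lemma pois_nonneg {lam : ℝ} (h : 0 ≤ lam) (m : ℕ) : 0 ≤ pois lam m := by
  unfold pois; positivity

lemma pois_summable (lam : ℝ) : Summable (pois lam) :=
  (Real.summable_pow_div_factorial lam).mul_left _

lemma pois_tsum (lam : ℝ) : ∑' m, pois lam m = 1 := by
  unfold pois
  rw [tsum_mul_left]
  have : ∑' m : ℕ, lam ^ m / (m.factorial : ℝ) = Real.exp lam := by
    rw [Real.exp_eq_exp_ℝ, NormedSpace.exp_eq_tsum_div]
  rw [this, ← Real.exp_add]
  simp

lemma poisCdf_le_one {lam : ℝ} (h : 0 ≤ lam) (k : ℕ) : poisCdf k lam ≤ 1 := by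
  rw [← pois_tsum lam]
  exact Summable.sum_le_tsum _ (fun m _ => pois_nonneg h m) (pois_summable lam)

lemma poisCdf_nonneg {lam : ℝ} (h : 0 ≤ lam) (k : ℕ) : 0 ≤ poisCdf k lam :=
  Finset.sum_nonneg fun m _ => pois_nonneg h m

lemma poisCdf_hasDerivAt (k : ℕ) (lam : ℝ) :
    HasDerivAt (fun l => poisCdf k l) (-(Real.exp (-lam) * (lam ^ k / k.factorial))) lam := by
  induction k with
  | zero =>
    have h : HasDerivAt (fun l : ℝ => Real.exp (-l)) (-Real.exp (-lam)) lam := by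
      have := (Real.hasDerivAt_exp (-lam)).comp lam (hasDerivAt_neg lam)
      exact this.congr_deriv (by ring)
    have heq : (fun l : ℝ => poisCdf 0 l) = fun l : ℝ => Real.exp (-l) := by
      funext l; simp [poisCdf, pois]
    rw [heq]
    convert h using 1
    simp
  | succ k ih =>
    have hsum : (fun l => poisCdf (k+1) l)
        = fun l => poisCdf k l + Real.exp (-l) * (l ^ (k+1) / (k+1).factorial) := by
      funext l
      simp [poisCdf, pois, Finset.sum_range_succ]
    rw [hsum]
    have hexp : HasDerivAt (fun l : ℝ => Real.exp (-l)) (-Real.exp (-lam)) lam := by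
      exact ((Real.hasDerivAt_exp (-lam)).comp lam (hasDerivAt_neg lam)).congr_deriv (by ring)
    have hpow : HasDerivAt (fun l : ℝ => l ^ (k+1) / ((k+1).factorial : ℝ))
        (((k+1) * lam ^ k) / ((k+1).factorial : ℝ)) lam := by
      have := (hasDerivAt_pow (k+1) lam).div_const ((k+1).factorial : ℝ)
      exact this.congr_deriv (by rw [Nat.add_sub_cancel]; push_cast; ring)
    have hterm := hexp.mul hpow
    have htotal := ih.add hterm
    refine htotal.congr_deriv ?_
    have hfact : ((k+1).factorial : ℝ) = (k+1) * k.factorial := by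
      rw [Nat.factorial_succ]; push_cast; ring
    have hk : (k.factorial : ℝ) ≠ 0 := Nat.cast_ne_zero.mpr k.factorial_ne_zero
    have hk1 : ((k+1).factorial : ℝ) ≠ 0 := Nat.cast_ne_zero.mpr (k+1).factorial_ne_zero
    rw [hfact]
    field_simp
    ring
  
lemma poisCdf_strictAnti (k : ℕ) : StrictAntiOn (fun lam => poisCdf k lam) (Set.Ici 0) := by
  apply strictAntiOn_of_deriv_neg (convex_Ici 0)
  · have : Continuous (fun lam => poisCdf k lam) :=
      continuous_iff_continuousAt.mpr fun l => (poisCdf_hasDerivAt k l).continuousAt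
    exact this.continuousOn
  · intro x hx
    rw [interior_Ici] at hx
    rw [(poisCdf_hasDerivAt k x).deriv]
    have hx0 : 0 < x := hx
    have : 0 < Real.exp (-x) * (x ^ k / k.factorial) := by positivity
    linarith

section Key
variable {a : ℕ → ℝ}

lemma key_bdd (hpos : ∀ m, 0 < a m) : BddBelow (Set.range a) :=
  ⟨0, fun x ⟨m, hm⟩ => hm ▸ (hpos m).le⟩

lemma key_L_le (hpos : ∀ m, 0 < a m) (hanti : StrictAnti a) (m : ℕ) : (⨅ n, a n) ≤ a m :=
  ciInf_le (key_bdd hpos) m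

lemma key_tel (hpos : ∀ m, 0 < a m) (hanti : StrictAnti a) (m : ℕ) :
    HasSum (fun j => a (m + j) - a (m + j + 1)) (a m - ⨅ n, a n) := by
  rw [hasSum_iff_tendsto_nat_of_nonneg
    (fun j => sub_nonneg.mpr (hanti.antitone (Nat.le_succ _)))]
  have hps : ∀ n : ℕ, ∑ j ∈ Finset.range n, (a (m + j) - a (m + j + 1)) = a m - a (m + n) := by
    intro n
    exact Finset.sum_range_sub' (fun j => a (m + j)) n
  simp_rw [hps]
  apply Tendsto.const_sub
  have hL : Tendsto a atTop (nhds (⨅ n, a n)) :=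
    tendsto_atTop_ciInf hanti.antitone (key_bdd hpos)
  have := hL.comp (tendsto_add_atTop_nat m)
  have heq : (a ∘ fun n => n + m) = fun n => a (m + n) := by
    funext n; simp [Nat.add_comm]
  rwa [heq] at this

lemma key_ite (hpos : ∀ m, 0 < a m) (hanti : StrictAnti a) (m : ℕ) :
    HasSum (fun k => if m ≤ k then a k - a (k+1) else 0) (a m - ⨅ n, a n) := by
  set f : ℕ → ℝ := fun k => if m ≤ k then a k - a (k+1) else 0 with hf
  have h0 : (fun n => f (n + m)) = fun n => a (m + n) - a (m + n + 1) := by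
    funext n
    simp only [hf, if_pos (Nat.le_add_left m n)]
    rw [Nat.add_comm n m]
  have h1 : HasSum (fun n => f (n + m)) (a m - ⨅ n, a n) := by
    rw [h0]; exact key_tel hpos hanti m
  have h2 := (hasSum_nat_add_iff m).mp h1
  have h3 : ∑ i ∈ Finset.range m, f i = 0 := by
    apply Finset.sum_eq_zero
    intro i hi
    simp only [hf]
    rw [if_neg]
    simp only [Finset.mem_range] at hi
    omega
  rw [h3, add_zero] at h2
  exact h2

lemma key_d_summable (hpos : ∀ m, 0 < a m) (hanti : StrictAnti a) :
    HasSum (fun k => a k - a (k+1)) (a 0 - ⨅ n, a n) := by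
  simpa using key_tel hpos hanti 0

lemma key_master (hpos : ∀ m, 0 < a m) (hanti : StrictAnti a) {lam : ℝ} (hlam : 0 ≤ lam) :
    ∑' m, pois lam m * a m
      = (⨅ n, a n) + ∑' k, (a k - a (k+1)) * poisCdf k lam := by
  set L := ⨅ n, a n with hL
  set d : ℕ → ℝ := fun k => a k - a (k+1) with hd
  have hd_nonneg : ∀ k, 0 ≤ d k := fun k => sub_nonneg.mpr (hanti.antitone (Nat.le_succ _))
  have haL : ∀ m, L ≤ a m := key_L_le hpos hanti
  -- summabilities
  have hps := pois_summable lam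
  have hpaL : Summable (fun m => pois lam m * (a m - L)) := by
    apply Summable.of_nonneg_of_le
      (fun m => mul_nonneg (pois_nonneg hlam m) (sub_nonneg.mpr (haL m)))
      (fun m => mul_le_mul_of_nonneg_left
        (by have := hanti.antitone (Nat.zero_le m); linarith) (pois_nonneg hlam m))
      (hps.mul_right (a 0 - L))
  have hdC_summable : Summable (fun k => d k * poisCdf k lam) := by
    apply Summable.of_nonneg_of_le
      (fun k => mul_nonneg (hd_nonneg k) (poisCdf_nonneg hlam k))
      (fun k => by
        have h := mul_le_mul_of_nonneg_left (poisCdf_le_one hlam k) (hd_nonneg k)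
        simpa using h)
      (key_d_summable hpos hanti).summable
  -- split
  have hsplit : ∑' m, pois lam m * a m
      = L + ∑' m, pois lam m * (a m - L) := by
    have h1 : ∀ m, pois lam m * a m = pois lam m * L + pois lam m * (a m - L) := by
      intro m; ring
    rw [tsum_congr h1, Summable.tsum_add (hps.mul_right L) hpaL, tsum_mul_right, pois_tsum, one_mul]
  rw [hsplit]
  congr 1
  -- the ENNReal double sum
  set F : ℕ → ℕ → ENNReal := fun m k =>
    if m ≤ k then ENNReal.ofReal (pois lam m * d k) else 0 with hF
  have claim1 : ∀ m, ∑' k, F m k = ENNReal.ofReal (pois lam m * (a m - L)) := by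
    intro m
    have he : (fun k => F m k)
        = fun k => ENNReal.ofReal (pois lam m * (if m ≤ k then d k else 0)) := by
      funext k
      by_cases h : m ≤ k <;> simp [hF, h]
    rw [he]
    have hsumm : Summable (fun k => pois lam m * (if m ≤ k then d k else 0)) :=
      ((key_ite hpos hanti m).summable).mul_left _
    rw [← ENNReal.ofReal_tsum_of_nonneg
      (fun k => mul_nonneg (pois_nonneg hlam m) (by split <;> simp [hd_nonneg])) hsumm]
    congr 1
    rw [tsum_mul_left, (key_ite hpos hanti m).tsum_eq]
  have claim2 : ∀ k, ∑' m, F m k = ENNReal.ofReal (d k * poisCdf k lam) := by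
    intro k
    rw [tsum_eq_sum (s := Finset.range (k+1))
      (fun m hm => by simp only [hF, if_neg (by simpa using hm : ¬ m ≤ k)])]
    have : ∀ m ∈ Finset.range (k+1), F m k = ENNReal.ofReal (pois lam m * d k) := by
      intro m hm
      simp only [hF, if_pos (by simpa [Nat.lt_succ_iff] using hm : m ≤ k)]
    rw [Finset.sum_congr rfl this,
      ← ENNReal.ofReal_sum_of_nonneg
        (fun m _ => mul_nonneg (pois_nonneg hlam m) (hd_nonneg k))]
    congr 1
    rw [← Finset.sum_mul]
    unfold poisCdf
    ring
  have hchain : ENNReal.ofReal (∑' m, pois lam m * (a m - L))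
      = ENNReal.ofReal (∑' k, d k * poisCdf k lam) := by
    rw [ENNReal.ofReal_tsum_of_nonneg
      (fun m => mul_nonneg (pois_nonneg hlam m) (sub_nonneg.mpr (haL m))) hpaL]
    rw [tsum_congr (fun m => (claim1 m).symm)]
    rw [ENNReal.tsum_comm]
    rw [tsum_congr (fun k => claim2 k)]
    rw [← ENNReal.ofReal_tsum_of_nonneg
      (fun k => mul_nonneg (hd_nonneg k) (poisCdf_nonneg hlam k)) hdC_summable]
  have h1 : (0:ℝ) ≤ ∑' m, pois lam m * (a m - L) :=
    tsum_nonneg (fun m => mul_nonneg (pois_nonneg hlam m) (sub_nonneg.mpr (haL m)))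
  have h2 : (0:ℝ) ≤ ∑' k, d k * poisCdf k lam :=
    tsum_nonneg (fun k => mul_nonneg (hd_nonneg k) (poisCdf_nonneg hlam k))
  exact (ENNReal.ofReal_eq_ofReal_iff h1 h2).mp hchain

lemma key_strictAnti (hpos : ∀ m, 0 < a m) (hanti : StrictAnti a) :
    StrictAntiOn (fun lam => Real.exp (-lam) * ∑' m : ℕ, (lam ^ m / m.factorial) * a m)
      (Set.Ioi 0) := by
  intro l1 hl1 l2 hl2 h12
  simp only
  have hrepr : ∀ l : ℝ, Real.exp (-l) * ∑' m : ℕ, (l ^ m / m.factorial) * a m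
      = ∑' m, pois l m * a m := by
    intro l
    rw [← tsum_mul_left]
    apply tsum_congr
    intro m
    unfold pois
    ring
  rw [hrepr, hrepr, key_master hpos hanti (le_of_lt hl1),
    key_master hpos hanti (le_of_lt hl2)]
  have hl1' : (0:ℝ) ≤ l1 := le_of_lt hl1
  have hl2' : (0:ℝ) ≤ l2 := le_of_lt hl2
  apply add_lt_add_right
  apply Summable.tsum_lt_tsum_of_nonneg (i := 0)
  · intro k
    exact mul_nonneg (sub_nonneg.mpr (hanti.antitone (Nat.le_succ _))) (poisCdf_nonneg hl2' k)
  · intro k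
    apply mul_le_mul_of_nonneg_left
      (le_of_lt ((poisCdf_strictAnti k) hl1' hl2' h12))
      (sub_nonneg.mpr (hanti.antitone (Nat.le_succ _)))
  · apply mul_lt_mul_of_pos_left ((poisCdf_strictAnti 0) hl1' hl2' h12)
      (sub_pos.mpr (hanti Nat.zero_lt_one))
  · apply Summable.of_nonneg_of_le
      (fun k => mul_nonneg (sub_nonneg.mpr (hanti.antitone (Nat.le_succ _)))
        (poisCdf_nonneg hl1' k))
      (fun k => by
        have h3 : (0:ℝ) ≤ a k - a (k+1) := sub_nonneg.mpr (hanti.antitone (Nat.le_succ _))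
        have h := mul_le_mul_of_nonneg_left (poisCdf_le_one hl1' k) h3
        simpa using h)
      (key_d_summable hpos hanti).summable

end Key

lemma rpow_split {y : ℝ} (hy : 0 < y) (b : ℝ) (m : ℕ) :
    y ^ (b + 2*(m:ℝ)) = y ^ b * (y^2)^m := by
  rw [Real.rpow_add hy]
  congr 1
  rw [show (2*(m:ℝ)) = ((2*m : ℕ) : ℝ) by push_cast; ring, Real.rpow_natCast, pow_mul]

lemma gamma_succ {u : ℝ} (hu : 1 ≤ u) (m : ℕ) :
    Real.Gamma (((m+1 : ℕ) : ℝ) + u/2) = ((m:ℝ) + u/2) * Real.Gamma (m + u/2) := by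
  have hm0 : (0:ℝ) ≤ m := Nat.cast_nonneg m
  have : ((m+1 : ℕ) : ℝ) + u/2 = ((m:ℝ) + u/2) + 1 := by push_cast; ring
  rw [this, Real.Gamma_add_one (by positivity : (m:ℝ) + u/2 ≠ 0)]

lemma summable_aux {u : ℝ} (hu : 1 ≤ u) (K q : ℝ) (hq : 0 ≤ q) :
    Summable (fun m : ℕ => K * q ^ m / (m.factorial * Real.Gamma (m + u/2))) := by
  have hbase : Summable (fun m : ℕ => q ^ m / (m.factorial * Real.Gamma (m + u/2))) := by
    apply summable_of_ratio_norm_eventually_le (r := 1/2) (by norm_num)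
    filter_upwards [Filter.eventually_ge_atTop (⌈2*q⌉₊ + 1)] with m hm
    have hm1 : 1 ≤ m := le_trans (by omega) hm
    have hm0 : (0:ℝ) ≤ m := Nat.cast_nonneg m
    have hmq : 2*q ≤ m := by
      have h1 : (⌈2*q⌉₊ : ℝ) ≤ m := by exact_mod_cast le_trans (by omega : ⌈2*q⌉₊ ≤ ⌈2*q⌉₊ + 1) hm
      exact le_trans (Nat.le_ceil _) h1
    have hm1' : (1:ℝ) ≤ m := by exact_mod_cast hm1
    have hγ : 0 < Real.Gamma ((m:ℝ) + u/2) := Real.Gamma_pos_of_pos (by linarith)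
    have hf : (0:ℝ) < m.factorial := by exact_mod_cast m.factorial_pos
    have heq : q ^ (m+1) / ((m+1).factorial * Real.Gamma (((m+1:ℕ):ℝ) + u/2))
        = (q ^ m / (m.factorial * Real.Gamma (m + u/2))) * (q / (((m:ℝ)+1) * ((m:ℝ) + u/2))) := by
      rw [gamma_succ hu m, pow_succ]
      have : (((m+1).factorial : ℕ) : ℝ) = ((m:ℝ)+1) * m.factorial := by
        rw [Nat.factorial_succ]; push_cast; ring
      rw [this]
      field_simp
    rw [Real.norm_eq_abs, Real.norm_eq_abs, heq, abs_mul]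
    have hfrac : |q / (((m:ℝ)+1) * ((m:ℝ) + u/2))| ≤ 1/2 := by
      rw [abs_of_nonneg (by positivity)]
      rw [div_le_iff₀ (by nlinarith)]
      nlinarith
    calc |q ^ m / (m.factorial * Real.Gamma (m + u/2))| * |q / (((m:ℝ)+1) * ((m:ℝ) + u/2))|
        ≤ |q ^ m / (m.factorial * Real.Gamma (m + u/2))| * (1/2) :=
          mul_le_mul_of_nonneg_left hfrac (abs_nonneg _)
      _ = 1/2 * |q ^ m / (m.factorial * Real.Gamma (m + u/2))| := by ring
  have := hbase.mul_left K
  exact this.congr (fun m => by ring)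

lemma repr_lemma {u δ r : ℝ} (hu : 1 ≤ u) (hδ : 0 < δ) (hr : 0 < r) :
    ncChiSqAtSq u δ r
      = Real.exp (-(δ^2/2)) * ∑' m : ℕ, ((δ^2/2)^m / m.factorial) * Acoef u r m := by
  have h4m : ∀ m : ℕ, (0:ℝ) < 4^m := fun m => by positivity
  have h2u : (0:ℝ) < (2:ℝ)^(u/2-1:ℝ) := Real.rpow_pos_of_pos two_pos _
  set v : ℕ → ℝ := fun m => u - 1 + 2*(m:ℝ) with hv
  set c : ℕ → ℝ := fun m =>
    δ ^ (u/2 - 1 + 2*(m:ℝ)) * ((2:ℝ)^(u/2-1:ℝ) * 4^m)⁻¹ / (m.factorial * Real.Gamma (m + u/2))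
    with hc
  have hvnn : ∀ m : ℕ, 0 ≤ v m := by
    intro m; have : (0:ℝ) ≤ m := Nat.cast_nonneg m; simp only [hv]; linarith
  have hγpos : ∀ m : ℕ, 0 < Real.Gamma ((m:ℝ) + u/2) := by
    intro m
    have hm0 : (0:ℝ) ≤ m := Nat.cast_nonneg m
    exact Real.Gamma_pos_of_pos (by linarith)
  have hfpos : ∀ m : ℕ, (0:ℝ) < m.factorial := fun m => by exact_mod_cast m.factorial_pos
  have hcnn : ∀ m : ℕ, 0 ≤ c m := by
    intro m
    have h1 : 0 < δ ^ (u/2 - 1 + 2*(m:ℝ)) := Real.rpow_pos_of_pos hδ _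
    have hγ := hγpos m
    have hf := hfpos m
    have h4 := h4m m
    simp only [hc]
    positivity
  -- pointwise identity on Ioc 0 r
  have stepA : ∀ x ∈ Set.Ioc (0:ℝ) r,
      x ^ (u/2) * Real.exp (-x^2/2) * besselI (u/2 - 1) (δ * x)
        = ∑' m : ℕ, c m * (x ^ (v m) * Real.exp (-x^2/2)) := by
    intro x hx
    have hx0 : 0 < x := hx.1
    unfold besselI
    rw [← tsum_mul_left]
    apply tsum_congr
    intro m
    have hΓarg : ((m:ℝ) + (u/2 - 1) + 1) = (m:ℝ) + u/2 := by ring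
    rw [hΓarg]
    have h1 : (δ * x / 2) ^ (u/2 - 1 + 2*(m:ℝ))
        = δ ^ (u/2 - 1 + 2*(m:ℝ)) * x ^ (u/2 - 1 + 2*(m:ℝ))
            / ((2:ℝ)^(u/2-1:ℝ) * 4^m) := by
      rw [Real.div_rpow (by positivity) (by norm_num),
        Real.mul_rpow hδ.le hx0.le, rpow_split two_pos]
      norm_num
    have h2 : x ^ (u/2) * x ^ (u/2 - 1 + 2*(m:ℝ)) = x ^ (v m) := by
      rw [← Real.rpow_add hx0]
      congr 1
      simp only [hv]; ring
    rw [h1, ← h2]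
    have hγ := (hγpos m).ne'
    have hf := (hfpos m).ne'
    have h4 := (h4m m).ne'
    have h2u' := h2u.ne'
    simp only [hc]
    field_simp
  -- interchange of sum and integral
  have hIoc : ∀ m : ℕ,
      (∫ x in Set.Ioc (0:ℝ) r, c m * (x ^ (v m) * Real.exp (-x^2/2)))
        = c m * Iv r (v m) := by
    intro m
    rw [MeasureTheory.integral_const_mul]
    congr 1
    rw [Iv, intervalIntegral.integral_of_le hr.le]
  have hintble : ∀ m : ℕ, AEStronglyMeasurable
      (fun x : ℝ => c m * (x ^ (v m) * Real.exp (-x^2/2)))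
      (volume.restrict (Set.Ioc 0 r)) := by
    intro m
    exact (((contOn_aux (hvnn m) (Set.Ioc 0 r)).const_smul (c m)).aestronglyMeasurable
      measurableSet_Ioc).congr (by
        filter_upwards with x
        simp [smul_eq_mul])
  have hbound : ∀ m : ℕ, (∫⁻ x in Set.Ioc (0:ℝ) r,
        ‖c m * (x ^ (v m) * Real.exp (-x^2/2))‖₊)
      ≤ ENNReal.ofReal (c m * r ^ (v m) * r) := by
    intro m
    have hle : ∀ x ∈ Set.Ioc (0:ℝ) r,
        (‖c m * (x ^ (v m) * Real.exp (-x^2/2))‖₊ : ENNReal)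
          ≤ ENNReal.ofReal (c m * r ^ (v m)) := by
      intro x hx
      have hx0 : 0 < x := hx.1
      have hterm : 0 ≤ c m * (x ^ (v m) * Real.exp (-x^2/2)) := by
        have := Real.rpow_nonneg hx0.le (v m)
        have := (Real.exp_pos (-x^2/2)).le
        have := hcnn m
        positivity
      rw [show (‖c m * (x ^ (v m) * Real.exp (-x^2/2))‖₊ : ENNReal) = ‖c m * (x ^ (v m) * Real.exp (-x^2/2))‖ₑ from rfl, Real.enorm_eq_ofReal hterm]
      apply ENNReal.ofReal_le_ofReal
      have hxr : x ^ (v m) ≤ r ^ (v m) := Real.rpow_le_rpow hx0.le hx.2 (hvnn m)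
      have hexp : Real.exp (-x^2/2) ≤ 1 := by
        rw [Real.exp_le_one_iff]
        nlinarith
      have h1 : x ^ (v m) * Real.exp (-x^2/2) ≤ r ^ (v m) := by
        have hrv : 0 ≤ x ^ (v m) := Real.rpow_nonneg hx0.le _
        nlinarith [Real.rpow_nonneg hr.le (v m), (Real.exp_pos (-x^2/2)).le]
      exact mul_le_mul_of_nonneg_left h1 (hcnn m)
    calc (∫⁻ x in Set.Ioc (0:ℝ) r, ‖c m * (x ^ (v m) * Real.exp (-x^2/2))‖₊)
        ≤ ∫⁻ _ in Set.Ioc (0:ℝ) r, ENNReal.ofReal (c m * r ^ (v m)) :=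
          setLIntegral_mono' measurableSet_Ioc hle
      _ = ENNReal.ofReal (c m * r ^ (v m)) * volume (Set.Ioc (0:ℝ) r) :=
          setLIntegral_const _ _
      _ = ENNReal.ofReal (c m * r ^ (v m) * r) := by
          rw [Real.volume_Ioc, ← ENNReal.ofReal_mul
            (mul_nonneg (hcnn m) (Real.rpow_nonneg hr.le _))]
          norm_num
  have hSummable : Summable (fun m : ℕ => c m * r ^ (v m) * r) := by
    have hKsum := summable_aux hu (δ ^ (u/2-1:ℝ) * ((2:ℝ)^(u/2-1:ℝ))⁻¹ * r ^ (u-1:ℝ) * r)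
      (δ^2 * r^2 / 4) (by positivity)
    apply hKsum.congr
    intro m
    simp only [hc, hv]
    rw [rpow_split hδ (u/2-1) m, rpow_split hr (u-1) m, div_pow]
    have hγ := (hγpos m).ne'
    have hf := (hfpos m).ne'
    have h4 := (h4m m).ne'
    have h2u' := h2u.ne'
    field_simp
    ring
  have hlint : (∑' m : ℕ, ∫⁻ x in Set.Ioc (0:ℝ) r,
      ‖c m * (x ^ (v m) * Real.exp (-x^2/2))‖₊) ≠ ⊤ := by
    apply ne_top_of_le_ne_top _ (ENNReal.tsum_le_tsum hbound)
    rw [← ENNReal.ofReal_tsum_of_nonneg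
      (fun m => mul_nonneg (mul_nonneg (hcnn m) (Real.rpow_nonneg hr.le _)) hr.le)
      hSummable]
    exact ENNReal.ofReal_ne_top
  have stepB : (∫ x in (0:ℝ)..r,
        x ^ (u/2) * Real.exp (-x^2/2) * besselI (u/2 - 1) (δ * x))
      = ∑' m : ℕ, c m * Iv r (v m) := by
    rw [intervalIntegral.integral_of_le hr.le,
      MeasureTheory.setIntegral_congr_fun measurableSet_Ioc stepA,
      MeasureTheory.integral_tsum hintble hlint]
    exact tsum_congr hIoc
  -- assembly
  unfold ncChiSqAtSq
  have hexp2 : (-δ^2/2 : ℝ) = -(δ^2/2) := by ring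
  rw [stepB, hexp2]
  rw [mul_comm (δ ^ (1 - u / 2)) (Real.exp (-(δ^2/2))), mul_assoc]
  congr 1
  rw [← tsum_mul_left]
  apply tsum_congr
  intro m
  have hδsplit : δ ^ (u/2 - 1 + 2*(m:ℝ)) = δ ^ (u/2-1:ℝ) * (δ^2)^m := rpow_split hδ _ m
  have hδinv : δ ^ (1 - u/2:ℝ) * δ ^ (u/2-1:ℝ) = 1 := by
    rw [← Real.rpow_add hδ, show (1 - u/2) + (u/2-1) = (0:ℝ) by ring, Real.rpow_zero]
  have h2split : (2:ℝ) ^ (1 - u/2 - (m:ℝ)) = ((2:ℝ)^(u/2-1:ℝ))⁻¹ / 2^m := by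
    rw [show (1 - u/2 - (m:ℝ)) = -(u/2-1) - (m:ℝ) by ring, Real.rpow_sub two_pos,
      Real.rpow_neg (by norm_num : (0:ℝ) ≤ 2), Real.rpow_natCast]
  simp only [hc, hv, Acoef]
  rw [hδsplit, h2split]
  have hγ := (hγpos m).ne'
  have hf := (hfpos m).ne'
  have h4 := (h4m m).ne'
  have h2u' := h2u.ne'
  have h2m : ((2:ℝ)^m) ≠ 0 := by positivity
  have hδu : δ ^ (1 - u/2:ℝ) ≠ 0 := (Real.rpow_pos_of_pos hδ _).ne'
  have hδu2 : δ ^ (u/2-1:ℝ) ≠ 0 := (Real.rpow_pos_of_pos hδ _).ne'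
  have hkey : δ ^ (1 - u/2:ℝ) = (δ ^ (u/2-1:ℝ))⁻¹ :=
    eq_inv_of_mul_eq_one_left hδinv
  rw [hkey]
  have h42 : (4:ℝ)^m = 2^m * 2^m := by
    rw [← mul_pow]; norm_num
  rw [h42, div_pow]
  field_simp

/-- For fixed `u ≥ 1` and `r > 0`, the noncentral chi-square cdf value
`F_{u,δ}(r²)` is a strictly decreasing function of `δ` on `(0, ∞)`. -/
theorem ncChiSqAtSq_strictAnti (u r : ℝ) (hu : 1 ≤ u) (hr : 0 < r) :
    StrictAntiOn (fun δ => ncChiSqAtSq u δ r) (Set.Ioi 0) := by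
  intro d1 h1 d2 h2 h12
  have hd1 : (0:ℝ) < d1 := h1
  have hd2 : (0:ℝ) < d2 := h2
  have key := key_strictAnti (Acoef_pos hu hr) (Acoef_anti hu hr)
  have hl1 : (0:ℝ) < d1^2/2 := by positivity
  have hl2 : (0:ℝ) < d2^2/2 := by positivity
  have hlt : d1^2/2 < d2^2/2 := by nlinarith
  simp only
  rw [repr_lemma hu hd1 hr, repr_lemma hu hd2 hr]
  exact key (Set.mem_Ioi.mpr hl1) (Set.mem_Ioi.mpr hl2) hlt
end

section
/- For fixed u, r > 0, the probability that a u-dimensional standard Gaussian vector shifted by a vector of norm δ lies in the origin-centered ball of radius r is strictly decreasing in δ > 0. -/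
open MeasureTheory ProbabilityTheory

namespace GaussBallAux

open Real Set

noncomputable section

/-! ### 1D lemmas -/

lemma continuous_gpdf : Continuous (gaussianPDFReal 0 1) := by
  unfold gaussianPDFReal; fun_prop

lemma gpdf_lt {a δ : ℝ} (ha : 0 < a) (hδ : 0 < δ) :
    gaussianPDFReal 0 1 (-a - δ) < gaussianPDFReal 0 1 (a - δ) := by
  unfold gaussianPDFReal
  have h2 : (0:ℝ) < (Real.sqrt (2 * π * 1))⁻¹ := by
    rw [inv_pos]; exact Real.sqrt_pos.2 (by positivity)
  apply mul_lt_mul_of_pos_left _ h2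
  apply Real.exp_lt_exp.2
  push_cast
  nlinarith

lemma oneDim_strictAnti {a : ℝ} (ha : 0 < a) {δ₁ δ₂ : ℝ} (h1 : 0 ≤ δ₁) (h12 : δ₁ < δ₂) :
    gaussianReal 0 1 (Set.Icc (-a - δ₂) (a - δ₂)) < gaussianReal 0 1 (Set.Icc (-a - δ₁) (a - δ₁)) := by
  set f := gaussianPDFReal 0 1 with hf
  have hfi : Integrable f := integrable_gaussianPDFReal 0 1
  have hfc : Continuous f := continuous_gpdf
  have hfnn : ∀ x, 0 ≤ f x := gaussianPDFReal_nonneg 0 1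
  set H : ℝ → ℝ := fun x => ∫ t in (0:ℝ)..x, f t with hH
  have hHd : ∀ x, HasDerivAt H (f x) x := fun x =>
    intervalIntegral.integral_hasDerivAt_right hfi.intervalIntegrable
      (hfc.stronglyMeasurableAtFilter _ _) hfc.continuousAt
  set G : ℝ → ℝ := fun δ => H (a - δ) - H (-a - δ) with hG
  have hGd : ∀ δ, HasDerivAt G (f (-a - δ) - f (a - δ)) δ := by
    intro δ
    have h1 : HasDerivAt (fun δ : ℝ => H (a - δ)) (f (a - δ) * (-1)) δ :=
      (hHd (a - δ)).comp δ (((hasDerivAt_id δ).const_sub a))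
    have h2 : HasDerivAt (fun δ : ℝ => H (-a - δ)) (f (-a - δ) * (-1)) δ :=
      (hHd (-a - δ)).comp δ (((hasDerivAt_id δ).const_sub (-a)))
    have := h1.sub h2
    refine this.congr_deriv ?_
    ring
  have hGdiff : Differentiable ℝ G := fun x => (hGd x).differentiableAt
  have hanti : StrictAntiOn G (Ici 0) := by
    apply strictAntiOn_of_deriv_neg (convex_Ici 0) hGdiff.continuous.continuousOn
    intro x hx
    rw [interior_Ici] at hx
    rw [(hGd x).deriv]
    have := gpdf_lt ha (hx : (0:ℝ) < x)
    linarith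
  have key : G δ₂ < G δ₁ := hanti h1 (le_of_lt (h1.trans_lt h12)) h12
  have hGint : ∀ δ, G δ = ∫ x in (-a - δ)..(a - δ), f x := fun δ =>
    intervalIntegral.integral_interval_sub_left hfi.intervalIntegrable hfi.intervalIntegrable
  have hGval : ∀ δ, gaussianReal 0 1 (Set.Icc (-a - δ) (a - δ)) = ENNReal.ofReal (G δ) := by
    intro δ
    rw [gaussianReal_apply_eq_integral 0 one_ne_zero]
    congr 1
    rw [hGint δ, intervalIntegral.integral_of_le (by linarith),
      ← MeasureTheory.integral_Icc_eq_integral_Ioc]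
  rw [hGval, hGval]
  apply (ENNReal.ofReal_lt_ofReal_iff_of_nonneg _).2 key
  rw [hGint δ₂]
  exact intervalIntegral.integral_nonneg (by linarith) (fun x _ => hfnn x)

/-! ### slice lemmas -/

lemma slice_set {c : ℝ} (δ : ℝ) (hc : 0 ≤ c) :
    {x : ℝ | (x + δ) ^ 2 ≤ c} = Icc (-Real.sqrt c - δ) (Real.sqrt c - δ) := by
  ext x
  simp only [mem_setOf_eq, mem_Icc]
  constructor
  · intro h
    have h2 := Real.sqrt_le_sqrt h
    rw [Real.sqrt_sq_eq_abs, abs_le] at h2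
    exact ⟨by linarith [h2.1], by linarith [h2.2]⟩
  · rintro ⟨hl, hu⟩
    have habs : |x + δ| ≤ Real.sqrt c := abs_le.2 ⟨by linarith, by linarith⟩
    calc (x + δ) ^ 2 = |x + δ| ^ 2 := (sq_abs _).symm
      _ ≤ Real.sqrt c ^ 2 := pow_le_pow_left₀ (abs_nonneg _) habs 2
      _ = c := Real.sq_sqrt hc

lemma gauss_null {s : Set ℝ} (h : volume s = 0) : gaussianReal 0 1 s = 0 := by
  rw [gaussianReal_apply 0 one_ne_zero]
  exact setLIntegral_measure_zero s _ h

lemma slice_zero {δ c : ℝ} (hc : c ≤ 0) : gaussianReal 0 1 {x : ℝ | (x + δ) ^ 2 ≤ c} = 0 := by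
  apply gauss_null
  apply measure_mono_null (t := {-δ}) _ (measure_singleton _)
  intro x hx
  simp only [mem_setOf_eq] at hx
  have h0 : (x + δ) ^ 2 = 0 := le_antisymm (hx.trans hc) (sq_nonneg _)
  have : x + δ = 0 := by nlinarith
  simp only [mem_singleton_iff]; linarith

lemma slice_lt {δ₁ δ₂ c : ℝ} (h1 : 0 ≤ δ₁) (h12 : δ₁ < δ₂) (hc : 0 < c) :
    gaussianReal 0 1 {x : ℝ | (x + δ₂) ^ 2 ≤ c} < gaussianReal 0 1 {x : ℝ | (x + δ₁) ^ 2 ≤ c} := by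
  rw [slice_set δ₁ hc.le, slice_set δ₂ hc.le]
  exact oneDim_strictAnti (Real.sqrt_pos.2 hc) h1 h12

/-! ### product density -/

lemma lintegral_pi_prod : ∀ (n : ℕ) (h : Fin n → ℝ → ENNReal), (∀ i, Measurable (h i)) →
    ∫⁻ x, ∏ i, h i (x i) ∂(Measure.pi fun _ : Fin n => (volume : Measure ℝ)) =
      ∏ i, ∫⁻ t, h i t := by
  intro n
  induction n with
  | zero => intro h _; simp
  | succ n ih =>
    intro h hm
    have hmp := (measurePreserving_piFinSuccAbove (fun _ : Fin (n+1) => (volume : Measure ℝ)) 0).symm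
    have hF : Measurable fun x : Fin (n+1) → ℝ => ∏ i, h i (x i) :=
      Finset.measurable_prod _ fun i _ => (hm i).comp (measurable_pi_apply i)
    rw [← hmp.lintegral_comp hF]
    simp_rw [MeasurableEquiv.piFinSuccAbove_symm_apply, Fin.insertNthEquiv,
      Equiv.coe_fn_mk, Fin.insertNth_zero, Fin.prod_univ_succ, Fin.cons_zero, Fin.cons_succ, cast_eq]
    rw [lintegral_prod_mul (f := h 0) (g := fun y : Fin n → ℝ => ∏ x : Fin n, h x.succ (y x))
      (hm 0).aemeasurable
      (Finset.measurable_prod _ fun j _ => (hm _).comp (measurable_pi_apply j)).aemeasurable]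
    rw [ih _ fun j => hm _]


/-! ### Gaussian pi measure as density against volume -/

variable {u : ℕ}

lemma norm_sq_eq (x : EuclideanSpace ℝ (Fin u)) : ‖x‖ ^ 2 = ∑ i, (x i) ^ 2 := by
  rw [EuclideanSpace.norm_eq, Real.sq_sqrt (by positivity)]
  simp [Real.norm_eq_abs, sq_abs]

lemma norm_le_iff {r : ℝ} (hr : 0 ≤ r) (x : EuclideanSpace ℝ (Fin u)) :
    ‖x‖ ≤ r ↔ ∑ i, (x i) ^ 2 ≤ r ^ 2 := by
  rw [EuclideanSpace.norm_eq, Real.sqrt_le_iff]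
  simp only [Real.norm_eq_abs, sq_abs]
  exact and_iff_right hr

/-- The radial density of the standard Gaussian. -/
def g0 (u : ℕ) (x : EuclideanSpace ℝ (Fin u)) : ENNReal :=
  ENNReal.ofReal (((Real.sqrt (2 * π))⁻¹) ^ u * Real.exp (-‖x‖ ^ 2 / 2))

lemma measurable_g0 : Measurable (g0 u) := by
  apply ENNReal.measurable_ofReal.comp
  exact (continuous_const.mul (((continuous_norm.pow 2).neg.div_const 2).rexp)).measurable

lemma prod_gaussianPDF (x : EuclideanSpace ℝ (Fin u)) :
    ∏ i, gaussianPDF 0 1 (x i) = g0 u x := by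
  unfold gaussianPDF g0
  rw [← ENNReal.ofReal_prod_of_nonneg fun i _ => gaussianPDFReal_nonneg 0 1 _]
  congr 1
  unfold gaussianPDFReal
  rw [Finset.prod_mul_distrib, Finset.prod_const, ← Real.exp_sum]
  congr 1
  · norm_num
  · congr 1
    push_cast
    simp only [sub_zero, mul_one, neg_div]
    rw [Finset.sum_neg_distrib, ← Finset.sum_div, ← norm_sq_eq]

lemma volume_euclidean_eq_pi :
    (volume : Measure (EuclideanSpace ℝ (Fin u))) =
      Measure.map (WithLp.toLp 2) (Measure.pi fun _ : Fin u => (volume : Measure ℝ)) := by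
  exact (PiLp.volume_preserving_toLp (Fin u)).map_eq.symm

lemma pi_gauss_eq_withDensity :
    (Measure.map (WithLp.toLp 2) (Measure.pi fun _ : Fin u => gaussianReal 0 1)) =
      (volume : Measure (EuclideanSpace ℝ (Fin u))).withDensity (g0 u) := by
  rw [volume_euclidean_eq_pi]
  have hm : Measurable (WithLp.toLp 2 : (Fin u → ℝ) → EuclideanSpace ℝ (Fin u)) :=
    (PiLp.volume_preserving_toLp (Fin u)).measurable
  suffices key : (Measure.pi fun _ : Fin u => gaussianReal 0 1) =
      (Measure.pi fun _ : Fin u => (volume : Measure ℝ)).withDensity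
        (fun x => g0 u (WithLp.toLp 2 x)) by
    rw [key]
    ext s hs
    rw [Measure.map_apply hm hs, withDensity_apply _ (hs.preimage hm), withDensity_apply _ hs,
      setLIntegral_map hs measurable_g0 hm]
  refine Measure.pi_eq fun s hs => ?_
  rw [withDensity_apply _ (MeasurableSet.univ_pi hs)]
  have hind : ∀ x : Fin u → ℝ, (univ.pi s).indicator (fun x => g0 u (WithLp.toLp 2 x)) x =
      ∏ i, (s i).indicator (gaussianPDF 0 1) (x i) := by
    intro x
    by_cases hx : x ∈ univ.pi s
    · rw [indicator_of_mem hx, ← prod_gaussianPDF (WithLp.toLp 2 x)]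
      exact Finset.prod_congr rfl fun i _ => (indicator_of_mem (hx i (mem_univ i)) _).symm
    · rw [indicator_of_notMem hx]
      obtain ⟨i, hi⟩ : ∃ i, x i ∉ s i := by simpa [Set.mem_pi] using hx
      exact (Finset.prod_eq_zero (Finset.mem_univ i) (indicator_of_notMem hi _)).symm
  rw [← lintegral_indicator (MeasurableSet.univ_pi hs)]
  calc ∫⁻ x, (univ.pi s).indicator (fun x => g0 u (WithLp.toLp 2 x)) x ∂(Measure.pi fun _ : Fin u => (volume : Measure ℝ))
      = ∫⁻ x, ∏ i, (s i).indicator (gaussianPDF 0 1) (x i)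
          ∂(Measure.pi fun _ : Fin u => (volume : Measure ℝ)) := by
        exact lintegral_congr hind
    _ = ∏ i : Fin u, ∫⁻ t, (s i).indicator (gaussianPDF 0 1) t := by
        exact lintegral_pi_prod u _ fun i => (measurable_gaussianPDF 0 1).indicator (hs i)
    _ = ∏ i : Fin u, gaussianReal 0 1 (s i) := by
        refine Finset.prod_congr rfl fun i _ => ?_
        rw [lintegral_indicator (hs i), gaussianReal_apply 0 one_ne_zero]

lemma map_isometry (T : EuclideanSpace ℝ (Fin u) ≃ₗᵢ[ℝ] EuclideanSpace ℝ (Fin u)) :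
    Measure.map T (Measure.map (WithLp.toLp 2) (Measure.pi fun _ : Fin u => gaussianReal 0 1)) =
      (Measure.map (WithLp.toLp 2) (Measure.pi fun _ : Fin u => gaussianReal 0 1)) := by
  have hT : Measurable (T : EuclideanSpace ℝ (Fin u) → EuclideanSpace ℝ (Fin u)) :=
    T.continuous.measurable
  ext s hs
  rw [Measure.map_apply hT hs, pi_gauss_eq_withDensity,
    withDensity_apply _ (hs.preimage hT), withDensity_apply _ hs]
  have hvol : Measure.map T (volume : Measure (EuclideanSpace ℝ (Fin u))) = volume :=
    T.measurePreserving.map_eq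
  conv_rhs => rw [← hvol]
  rw [setLIntegral_map hs measurable_g0 hT]
  refine setLIntegral_congr_fun (hs.preimage hT) (fun x _ => ?_)
  unfold g0
  rw [T.norm_map]

lemma exists_isometry (x y : EuclideanSpace ℝ (Fin u)) (h : ‖x‖ = ‖y‖) :
    ∃ T : EuclideanSpace ℝ (Fin u) ≃ₗᵢ[ℝ] EuclideanSpace ℝ (Fin u), T x = y := by
  rcases eq_or_ne x y with rfl | hne
  · exact ⟨LinearIsometryEquiv.refl ℝ _, rfl⟩
  · exact ⟨Submodule.reflection (Submodule.span ℝ {x - y})ᗮ, Submodule.reflection_sub h⟩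

lemma measure_shift_eq (r : ℝ) (μ μ' : EuclideanSpace ℝ (Fin u)) (h : ‖μ‖ = ‖μ'‖) :
    (Measure.pi fun _ : Fin u => gaussianReal 0 1) ((WithLp.toLp 2 : (Fin u → ℝ) → EuclideanSpace ℝ (Fin u)) ⁻¹'
        {z : EuclideanSpace ℝ (Fin u) | ‖z + μ‖ ≤ r}) =
      (Measure.pi fun _ : Fin u => gaussianReal 0 1) ((WithLp.toLp 2 : (Fin u → ℝ) → EuclideanSpace ℝ (Fin u)) ⁻¹'
        {z : EuclideanSpace ℝ (Fin u) | ‖z + μ'‖ ≤ r}) := by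
  have hm : Measurable (WithLp.toLp 2 : (Fin u → ℝ) → EuclideanSpace ℝ (Fin u)) :=
    (PiLp.volume_preserving_toLp (Fin u)).measurable
  have hs0 : ∀ ν : EuclideanSpace ℝ (Fin u), MeasurableSet {z : EuclideanSpace ℝ (Fin u) | ‖z + ν‖ ≤ r} :=
    fun ν => (isClosed_le (continuous_id.add continuous_const).norm continuous_const).measurableSet
  rw [← Measure.map_apply hm (hs0 μ), ← Measure.map_apply hm (hs0 μ')]
  obtain ⟨T, hT⟩ := exists_isometry μ μ' h
  have hs : MeasurableSet {z : EuclideanSpace ℝ (Fin u) | ‖z + μ'‖ ≤ r} :=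
    (isClosed_le (continuous_id.add continuous_const).norm continuous_const).measurableSet
  have hmp := Measure.map_apply
    (μ := (Measure.map (WithLp.toLp 2) (Measure.pi fun _ : Fin u => gaussianReal 0 1)))
    T.continuous.measurable hs
  rw [map_isometry T] at hmp
  refine Eq.trans ?_ hmp.symm
  congr 1
  ext z
  simp only [mem_setOf_eq, mem_preimage, ← hT, ← map_add, LinearIsometryEquiv.norm_map]



/-! ### Fubini reduction -/

lemma fubini_single (n : ℕ) (r δ : ℝ) (hr : 0 ≤ r) :
    (Measure.pi fun _ : Fin (n+1) => gaussianReal 0 1) ((WithLp.toLp 2 : (Fin (n+1) → ℝ) → EuclideanSpace ℝ (Fin (n+1))) ⁻¹'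
        {z : EuclideanSpace ℝ (Fin (n+1)) | ‖z + EuclideanSpace.single 0 δ‖ ≤ r}) =
      ∫⁻ y : Fin n → ℝ, gaussianReal 0 1 {x : ℝ | (x + δ) ^ 2 + ∑ j, (y j) ^ 2 ≤ r ^ 2}
        ∂(Measure.pi fun _ : Fin n => gaussianReal 0 1) := by
  have hset : (WithLp.toLp 2 : (Fin (n+1) → ℝ) → EuclideanSpace ℝ (Fin (n+1))) ⁻¹'
      {z : EuclideanSpace ℝ (Fin (n+1)) | ‖z + EuclideanSpace.single 0 δ‖ ≤ r} =
      {z : Fin (n+1) → ℝ | (z 0 + δ) ^ 2 + ∑ j : Fin n, (z j.succ) ^ 2 ≤ r ^ 2} := by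
    ext z
    show ‖WithLp.toLp 2 z + EuclideanSpace.single 0 δ‖ ≤ r ↔
      (z 0 + δ) ^ 2 + ∑ j : Fin n, (z j.succ) ^ 2 ≤ r ^ 2
    rw [norm_le_iff hr, Fin.sum_univ_succ]
    simp [PiLp.add_apply, EuclideanSpace.single_apply, Fin.succ_ne_zero]
  rw [hset]
  have hmp := measurePreserving_piFinSuccAbove (fun _ : Fin (n+1) => gaussianReal 0 1) 0
  set B : Set (ℝ × (Fin n → ℝ)) := {p | (p.1 + δ) ^ 2 + ∑ j, (p.2 j) ^ 2 ≤ r ^ 2} with hB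
  have hBm : MeasurableSet B := by
    apply measurableSet_le _ measurable_const
    fun_prop
  have hpre : (MeasurableEquiv.piFinSuccAbove (fun _ : Fin (n+1) => ℝ) 0) ⁻¹' B =
      {z : Fin (n+1) → ℝ | (z 0 + δ) ^ 2 + ∑ j : Fin n, (z j.succ) ^ 2 ≤ r ^ 2} := by
    ext z
    simp only [mem_preimage, MeasurableEquiv.piFinSuccAbove_apply, hB, mem_setOf_eq,
      Fin.insertNthEquiv, Equiv.coe_fn_symm_mk, Fin.removeNth, Fin.zero_succAbove]
  rw [← hpre, hmp.measure_preimage hBm.nullMeasurableSet, Measure.prod_apply_symm hBm]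
  refine lintegral_congr fun y => ?_
  congr 1

/-! ### positivity -/

lemma gauss_Ioo_pos {a b : ℝ} (h : a < b) : 0 < gaussianReal 0 1 (Ioo a b) := by
  rw [gaussianReal_apply 0 one_ne_zero, ← lintegral_indicator measurableSet_Ioo]
  rw [lintegral_pos_iff_support ((measurable_gaussianPDF 0 1).indicator measurableSet_Ioo)]
  have hsupp : Function.support ((Ioo a b).indicator (gaussianPDF 0 1)) = Ioo a b := by
    rw [Set.support_indicator]
    have : Function.support (gaussianPDF 0 1) = univ :=
      eq_univ_of_forall fun x => (gaussianPDF_pos 0 one_ne_zero x).ne'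
    rw [this, inter_univ]
  rw [hsupp, Real.volume_Ioo]
  exact ENNReal.ofReal_pos.2 (by linarith)

lemma A_pos (n : ℕ) {r : ℝ} (hr : 0 < r) :
    0 < (Measure.pi fun _ : Fin n => gaussianReal 0 1)
      {y : Fin n → ℝ | ∑ j, (y j) ^ 2 < r ^ 2} := by
  set ε := r / (n + 1) with hε
  have hε0 : 0 < ε := by positivity
  have hsub : (univ.pi fun _ : Fin n => Ioo (-ε) ε) ⊆ {y : Fin n → ℝ | ∑ j, (y j) ^ 2 < r ^ 2} := by
    intro y hy
    simp only [mem_setOf_eq]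
    have hb : ∀ j, (y j) ^ 2 ≤ ε ^ 2 := fun j => by
      have h2 := hy j (mem_univ j)
      nlinarith [h2.1, h2.2]
    have hn : (0:ℝ) ≤ (n:ℝ) := Nat.cast_nonneg n
    calc ∑ j, (y j) ^ 2 ≤ ∑ _j : Fin n, ε ^ 2 := Finset.sum_le_sum fun j _ => hb j
      _ = (n : ℝ) * ε ^ 2 := by
          rw [Finset.sum_const, Finset.card_univ, Fintype.card_fin, nsmul_eq_mul]
      _ < r ^ 2 := by
          rw [hε, div_pow]
          have h1 : (0:ℝ) < ((n:ℝ) + 1) ^ 2 := by positivity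
          rw [← mul_div_assoc, div_lt_iff₀ h1]
          nlinarith [mul_pos hr hr, mul_nonneg (mul_pos hr hr).le hn, mul_nonneg (mul_pos hr hr).le (sq_nonneg ((n:ℝ)))]
  refine lt_of_lt_of_le ?_ (measure_mono hsub)
  rw [Measure.pi_pi]
  rw [CanonicallyOrderedAdd.prod_pos]
  exact fun i _ => gauss_Ioo_pos (by linarith)


end

end GaussBallAux

/-- For fixed `u` and `r > 0`, the probability that a `u`-dimensional
standard Gaussian vector shifted by a vector of norm `δ` lies in the origin-centered
ball of radius `r` is strictly decreasing in `δ > 0`. -/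
theorem gaussian_ball_prob_strictAnti (u : ℕ) (hu : 0 < u) (r : ℝ) (hr : 0 < r)
    (μ₁ μ₂ : EuclideanSpace ℝ (Fin u)) (h1 : 0 < ‖μ₁‖) (h12 : ‖μ₁‖ < ‖μ₂‖) :
    (Measure.pi fun _ : Fin u => gaussianReal 0 1) ((WithLp.toLp 2 : (Fin u → ℝ) → EuclideanSpace ℝ (Fin u)) ⁻¹'
        {z : EuclideanSpace ℝ (Fin u) | ‖z + μ₂‖ ≤ r}) <
      (Measure.pi fun _ : Fin u => gaussianReal 0 1) ((WithLp.toLp 2 : (Fin u → ℝ) → EuclideanSpace ℝ (Fin u)) ⁻¹'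
        {z : EuclideanSpace ℝ (Fin u) | ‖z + μ₁‖ ≤ r}) := by
  obtain ⟨n, rfl⟩ : ∃ n, u = n + 1 := ⟨u - 1, (Nat.succ_pred_eq_of_pos hu).symm⟩
  have hδ1 : 0 ≤ ‖μ₁‖ := norm_nonneg μ₁
  have hs1 : ‖μ₁‖ = ‖(EuclideanSpace.single (0 : Fin (n+1)) ‖μ₁‖ : EuclideanSpace ℝ (Fin (n+1)))‖ := by
    rw [EuclideanSpace.norm_single, Real.norm_of_nonneg hδ1]
  have hs2 : ‖μ₂‖ = ‖(EuclideanSpace.single (0 : Fin (n+1)) ‖μ₂‖ : EuclideanSpace ℝ (Fin (n+1)))‖ := by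
    rw [EuclideanSpace.norm_single, Real.norm_of_nonneg (norm_nonneg μ₂)]
  rw [GaussBallAux.measure_shift_eq r μ₁ (EuclideanSpace.single 0 ‖μ₁‖) hs1,
    GaussBallAux.measure_shift_eq r μ₂ (EuclideanSpace.single 0 ‖μ₂‖) hs2,
    GaussBallAux.fubini_single n r ‖μ₁‖ hr.le, GaussBallAux.fubini_single n r ‖μ₂‖ hr.le]
  set P : Measure (Fin n → ℝ) := Measure.pi fun _ : Fin n => gaussianReal 0 1 with hP
  set A : Set (Fin n → ℝ) := {y | ∑ j, (y j) ^ 2 < r ^ 2} with hA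
  have hAm : MeasurableSet A := by
    apply measurableSet_lt _ measurable_const
    fun_prop
  set g : ℝ → (Fin n → ℝ) → ENNReal := fun δ y =>
    gaussianReal 0 1 {x : ℝ | (x + δ) ^ 2 + ∑ j, (y j) ^ 2 ≤ r ^ 2} with hg
  have hgm : ∀ δ, Measurable (g δ) := by
    intro δ
    have hBm : MeasurableSet {p : ℝ × (Fin n → ℝ) | (p.1 + δ) ^ 2 + ∑ j, (p.2 j) ^ 2 ≤ r ^ 2} := by
      apply measurableSet_le _ measurable_const
      fun_prop
    exact measurable_measure_prodMk_right hBm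
  have hsetconv : ∀ (δ : ℝ) (y : Fin n → ℝ),
      {x : ℝ | (x + δ) ^ 2 + ∑ j, (y j) ^ 2 ≤ r ^ 2}
        = {x : ℝ | (x + δ) ^ 2 ≤ r ^ 2 - ∑ j, (y j) ^ 2} := by
    intro δ y
    ext x
    rw [Set.mem_setOf_eq, Set.mem_setOf_eq, le_sub_iff_add_le]
  have hzero : ∀ (δ : ℝ), ∀ y ∉ A, g δ y = 0 := by
    intro δ y hy
    rw [hg]
    simp only
    rw [hsetconv δ y]
    apply GaussBallAux.slice_zero
    simp only [hA, Set.mem_setOf_eq, not_lt] at hy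
    linarith
  have hlt : ∀ y ∈ A, g ‖μ₂‖ y < g ‖μ₁‖ y := by
    intro y hy
    rw [hg]
    simp only
    rw [hsetconv, hsetconv]
    refine GaussBallAux.slice_lt hδ1 h12 ?_
    simp only [hA, Set.mem_setOf_eq] at hy
    linarith
  have hsplit : ∀ δ, ∫⁻ y, g δ y ∂P = ∫⁻ y in A, g δ y ∂P := by
    intro δ
    rw [← lintegral_add_compl (g δ) hAm]
    have h0 : ∫⁻ y in Aᶜ, g δ y ∂P = 0 := by
      rw [setLIntegral_congr_fun hAm.compl
        (fun y hy => hzero δ y hy)]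
      simp
    rw [h0, add_zero]
  rw [show (∫⁻ y : Fin n → ℝ, gaussianReal 0 1
        {x : ℝ | (x + ‖μ₂‖) ^ 2 + ∑ j, (y j) ^ 2 ≤ r ^ 2} ∂P) = ∫⁻ y, g ‖μ₂‖ y ∂P from rfl,
    show (∫⁻ y : Fin n → ℝ, gaussianReal 0 1
        {x : ℝ | (x + ‖μ₁‖) ^ 2 + ∑ j, (y j) ^ 2 ≤ r ^ 2} ∂P) = ∫⁻ y, g ‖μ₁‖ y ∂P from rfl,
    hsplit, hsplit]
  have hres : P.restrict A ≠ 0 := by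
    rw [Ne, Measure.restrict_eq_zero]
    exact (GaussBallAux.A_pos n hr).ne'
  refine lintegral_strict_mono hres ((hgm ‖μ₁‖).aemeasurable.restrict) ?_ ?_
  · refine ne_of_lt (lt_of_le_of_lt
      (lintegral_mono (g := fun _ => (1 : ENNReal)) fun y => prob_le_one) ?_)
    rw [setLIntegral_one]
    exact lt_of_le_of_lt prob_le_one ENNReal.one_lt_top
  · exact (ae_restrict_iff' hAm).2 (Filter.Eventually.of_forall hlt)
end

section
/- For fixed u, v and c > 0, the power 1 - G_{u,v,δ}(c) of the F-test is a strictly increasing function of the noncentrality parameter δ > 0. -/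
/-- The cdf `F_{u,δ}` of a noncentral chi-square distribution with `u` degrees of freedom
and noncentrality `δ`, via the representation
`F_{u,δ}(r²) = δ^{1-u/2} e^{-δ²/2} ∫_0^r x^{u/2} e^{-x²/2} I_{u/2-1}(δx) dx`. -/
noncomputable def ncChiSqCDF (u δ t : ℝ) : ℝ :=
  δ ^ (1 - u / 2) * Real.exp (-δ ^ 2 / 2) *
    ∫ x in (0:ℝ)..Real.sqrt t, x ^ (u / 2) * Real.exp (-x ^ 2 / 2) * besselI (u / 2 - 1) (δ * x)

/-- The cdf `G_{u,v,δ}` of the noncentral F distribution: `G_{u,v,δ}(c) = E_V[F_{u,δ}(cuV/v)]`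
where `V ~ χ²(v)`, i.e. `V` has the Gamma distribution with shape `v/2` and rate `1/2`. -/
noncomputable def ncFCDF (u v δ c : ℝ) : ℝ :=
  ∫ x, ncChiSqCDF u δ (c * u * x / v) ∂(ProbabilityTheory.gammaMeasure (v / 2) (1 / 2))

open MeasureTheory Set

namespace NCF


/-- Lower incomplete gamma function. -/
noncomputable def lig (a x : ℝ) : ℝ := ∫ s in (0:ℝ)..x, s ^ (a - 1) * Real.exp (-s)

/-- Regularized lower incomplete gamma function. -/
noncomputable def preg (a x : ℝ) : ℝ := lig a x / Real.Gamma a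

lemma lig_intervalIntegrable {a : ℝ} (ha : 0 < a) (p q : ℝ) :
    IntervalIntegrable (fun s => s ^ (a - 1) * Real.exp (-s)) volume p q :=
  (intervalIntegral.intervalIntegrable_rpow' (by linarith)).mul_continuousOn
    (Real.continuous_exp.comp continuous_neg).continuousOn

lemma continuous_lig {a : ℝ} (ha : 0 < a) : Continuous (lig a) :=
  intervalIntegral.continuous_primitive (fun p q => lig_intervalIntegrable ha p q) 0

lemma lig_nonneg {a x : ℝ} (hx : 0 ≤ x) : 0 ≤ lig a x :=
  intervalIntegral.integral_nonneg hx fun s hs =>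
    mul_nonneg (Real.rpow_nonneg hs.1 _) (Real.exp_pos _).le

lemma lig_zero (a : ℝ) : lig a 0 = 0 := intervalIntegral.integral_same

lemma lig_le_Gamma {a x : ℝ} (ha : 0 < a) (hx : 0 ≤ x) : lig a x ≤ Real.Gamma a := by
  rw [Real.Gamma_eq_integral ha, lig, intervalIntegral.integral_of_le hx]
  have hInt : IntegrableOn (fun s : ℝ => Real.exp (-s) * s ^ (a - 1)) (Ioi 0) volume :=
    Real.GammaIntegral_convergent ha
  calc ∫ s in Ioc 0 x, s ^ (a - 1) * Real.exp (-s)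
      = ∫ s in Ioc 0 x, Real.exp (-s) * s ^ (a - 1) := by simp_rw [mul_comm]
    _ ≤ ∫ s in Ioi 0, Real.exp (-s) * s ^ (a - 1) := by
        apply setIntegral_mono_set hInt
        · filter_upwards [ae_restrict_mem measurableSet_Ioi] with s hs
          exact mul_nonneg (Real.exp_pos _).le (Real.rpow_nonneg (le_of_lt hs) _)
        · exact HasSubset.Subset.eventuallyLE Ioc_subset_Ioi_self

lemma preg_nonneg {a x : ℝ} (ha : 0 < a) (hx : 0 ≤ x) : 0 ≤ preg a x :=
  div_nonneg (lig_nonneg hx) (Real.Gamma_pos_of_pos ha).le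

lemma preg_le_one {a x : ℝ} (ha : 0 < a) (hx : 0 ≤ x) : preg a x ≤ 1 :=
  div_le_one_of_le₀ (lig_le_Gamma ha hx) (Real.Gamma_pos_of_pos ha).le

lemma preg_zero (a : ℝ) : preg a 0 = 0 := by simp [preg, lig_zero]

lemma lig_succ {a x : ℝ} (ha : 0 < a) (hx : 0 ≤ x) :
    lig (a + 1) x = a * lig a x - x ^ a * Real.exp (-x) := by
  have key : ∫ s in (0:ℝ)..x,
        (s ^ a * Real.exp (-s) - a * (s ^ (a - 1) * Real.exp (-s)))
      = -(x ^ a * Real.exp (-x)) - -((0:ℝ) ^ a * Real.exp (-0)) := by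
    apply intervalIntegral.integral_eq_sub_of_hasDerivAt_of_le hx
    · apply ContinuousOn.neg
      apply ContinuousOn.mul _ (Real.continuous_exp.comp continuous_neg).continuousOn
      intro s _
      exact (Real.continuousAt_rpow_const s a (Or.inr ha.le)).continuousWithinAt
    · intro s hs
      have h1 : HasDerivAt (fun s : ℝ => s ^ a) (a * s ^ (a - 1)) s :=
        Real.hasDerivAt_rpow_const (Or.inl hs.1.ne')
      have h2 : HasDerivAt (fun s : ℝ => Real.exp (-s)) (-Real.exp (-s)) s := by
        simpa [Function.comp_def] using (Real.hasDerivAt_exp (-s)).comp s (hasDerivAt_neg s)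
      have h3 := (h1.mul h2).neg
      convert h3 using 1
      · rfl
      ring
    · apply IntervalIntegrable.sub
      · exact (intervalIntegral.intervalIntegrable_rpow' (by linarith)).mul_continuousOn
          (Real.continuous_exp.comp continuous_neg).continuousOn
      · exact (lig_intervalIntegrable ha 0 x).const_mul a
  have hi1 : IntervalIntegrable (fun s : ℝ => s ^ a * Real.exp (-s)) volume 0 x :=
    (intervalIntegral.intervalIntegrable_rpow' (by linarith)).mul_continuousOn
      (Real.continuous_exp.comp continuous_neg).continuousOn
  have hi2 : IntervalIntegrable (fun s : ℝ => a * (s ^ (a - 1) * Real.exp (-s)))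
      volume 0 x := (lig_intervalIntegrable ha 0 x).const_mul a
  rw [intervalIntegral.integral_sub hi1 hi2, intervalIntegral.integral_const_mul] at key
  have h0 : ((0:ℝ) ^ a : ℝ) = 0 := Real.zero_rpow ha.ne'
  have hlig : lig (a + 1) x = ∫ s in (0:ℝ)..x, s ^ a * Real.exp (-s) := by
    rw [lig]; norm_num
  rw [← hlig] at key
  rw [h0] at key
  have key2 : lig (a + 1) x - a * lig a x
      = -(x ^ a * Real.exp (-x)) - -(0 * Real.exp (-0)) := key
  simp only [zero_mul, neg_zero, sub_zero] at key2
  linarith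

lemma preg_succ {a x : ℝ} (ha : 0 < a) (hx : 0 ≤ x) :
    preg (a + 1) x = preg a x - x ^ a * Real.exp (-x) / Real.Gamma (a + 1) := by
  have hga : Real.Gamma (a + 1) = a * Real.Gamma a := Real.Gamma_add_one ha.ne'
  have hg0 : Real.Gamma a ≠ 0 := (Real.Gamma_pos_of_pos ha).ne'
  rw [preg, preg, lig_succ ha hx, hga]
  field_simp

lemma preg_succ_le {a x : ℝ} (ha : 0 < a) (hx : 0 ≤ x) : preg (a + 1) x ≤ preg a x := by
  rw [preg_succ ha hx]
  have : 0 ≤ x ^ a * Real.exp (-x) / Real.Gamma (a + 1) :=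
    div_nonneg (mul_nonneg (Real.rpow_nonneg hx _) (Real.exp_pos _).le)
      (Real.Gamma_pos_of_pos (by linarith)).le
  linarith

lemma preg_succ_lt {a x : ℝ} (ha : 0 < a) (hx : 0 < x) : preg (a + 1) x < preg a x := by
  rw [preg_succ ha hx.le]
  have : 0 < x ^ a * Real.exp (-x) / Real.Gamma (a + 1) :=
    div_pos (mul_pos (Real.rpow_pos_of_pos hx _) (Real.exp_pos _))
      (Real.Gamma_pos_of_pos (by linarith))
  linarith



lemma exp_eq_tsum_div (x : ℝ) : Real.exp x = ∑' n : ℕ, x ^ n / n.factorial := by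
  rw [Real.exp_eq_exp_ℝ, NormedSpace.exp_eq_tsum_div]

lemma poisson_strictAnti {c : ℕ → ℝ} (hc0 : ∀ m, 0 ≤ c m) (hc1 : ∀ m, c m ≤ 1)
    (hmono : ∀ m n, m ≤ n → c n ≤ c m) (h01 : c 1 < c 0)
    {l1 l2 : ℝ} (h1 : 0 ≤ l1) (h12 : l1 < l2) :
    Real.exp (-l2) * ∑' m : ℕ, c m * l2 ^ m / m.factorial <
      Real.exp (-l1) * ∑' m : ℕ, c m * l1 ^ m / m.factorial := by
  set μ := l2 - l1 with hμdef
  have hμ0 : 0 < μ := by simp only [hμdef]; linarith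
  set w : ℕ → ℕ → ℝ := fun n k => l1 ^ (n - k) / (n - k).factorial * (μ ^ k / k.factorial)
    with hwdef
  have hw0 : ∀ n k, 0 ≤ w n k := fun n k => by
    apply mul_nonneg <;> positivity
  set A : ℕ → ℝ := fun n => ∑ k ∈ Finset.range (n + 1), c n * w n k with hAdef
  set B : ℕ → ℝ := fun n => ∑ k ∈ Finset.range (n + 1), c (n - k) * w n k with hBdef
  -- the total weight
  have claim0 : ∀ n : ℕ, ∑ k ∈ Finset.range (n + 1), w n k = l2 ^ n / n.factorial := by
    intro n
    have hl2 : l2 = μ + l1 := by rw [hμdef]; ring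
    rw [hl2, add_pow, Finset.sum_div]
    apply Finset.sum_congr rfl
    intro k hk
    have hkn : k ≤ n := Nat.lt_succ_iff.mp (Finset.mem_range.mp hk)
    have hch : ((n.choose k : ℝ)) * (k.factorial : ℝ) * ((n - k).factorial : ℝ)
        = (n.factorial : ℝ) := by
      exact_mod_cast congrArg (Nat.cast (R := ℝ))
        (Nat.choose_mul_factorial_mul_factorial hkn)
    have hnf : ((n.factorial : ℝ)) ≠ 0 := by
      exact_mod_cast (Nat.factorial_pos n).ne'
    have hd : (0:ℝ) < ((n - k).factorial : ℝ) * (k.factorial : ℝ) := by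
      have := (Nat.factorial_pos (n-k)); have := (Nat.factorial_pos k); positivity
    simp only [hwdef]
    rw [div_mul_div_comm, div_eq_div_iff hd.ne' hnf]
    linear_combination (-(l1 ^ (n - k) * μ ^ k)) * hch
  -- A sums to the l2 series
  have claimA : ∀ n : ℕ, A n = c n * l2 ^ n / n.factorial := by
    intro n
    simp only [hAdef]
    rw [← Finset.mul_sum, claim0 n, mul_div_assoc]
  -- summability facts
  have hsum2 := Real.summable_pow_div_factorial l2
  have hsum1 := Real.summable_pow_div_factorial l1
  have hl20 : 0 ≤ l2 := by linarith
  have hBle : ∀ n, B n ≤ l2 ^ n / n.factorial := by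
    intro n
    simp only [hBdef]
    rw [← claim0 n]
    apply Finset.sum_le_sum
    intro k _
    calc c (n - k) * w n k ≤ 1 * w n k :=
          mul_le_mul_of_nonneg_right (hc1 _) (hw0 n k)
      _ = w n k := one_mul _
  have hB0 : ∀ n, 0 ≤ B n := fun n =>
    Finset.sum_nonneg fun k _ => mul_nonneg (hc0 _) (hw0 n k)
  have hA0 : ∀ n, 0 ≤ A n := fun n =>
    Finset.sum_nonneg fun k _ => mul_nonneg (hc0 _) (hw0 n k)
  have hAleB : ∀ n, A n ≤ B n := by
    intro n
    apply Finset.sum_le_sum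
    intro k hk
    have hkn : k ≤ n := Nat.lt_succ_iff.mp (Finset.mem_range.mp hk)
    exact mul_le_mul_of_nonneg_right (hmono (n - k) n (Nat.sub_le n k)) (hw0 n k)
  have hA1B1 : A 1 < B 1 := by
    have hw11 : w 1 1 = μ := by simp [hwdef]
    simp only [hAdef, hBdef, Finset.sum_range_succ, Finset.sum_range_zero, zero_add]
    simp only [Nat.sub_self, Nat.sub_zero, hw11]
    have := mul_lt_mul_of_pos_right h01 hμ0
    linarith
  have hsumB : Summable B := Summable.of_nonneg_of_le hB0 hBle hsum2
  have hsumA : Summable A := Summable.of_nonneg_of_le hA0 hAleB hsumB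
  have hAB : ∑' n, A n < ∑' n, B n := Summable.tsum_lt_tsum_of_nonneg hA0 hAleB hA1B1 hsumB
  -- identify the B sum via the Cauchy product
  have hf : Summable fun m : ℕ => ‖c m * l1 ^ m / m.factorial‖ := by
    apply Summable.of_nonneg_of_le (fun m => norm_nonneg _) _ hsum1
    intro m
    have hfp : (0:ℝ) < m.factorial := by exact_mod_cast m.factorial_pos
    rw [Real.norm_eq_abs, abs_of_nonneg (div_nonneg (mul_nonneg (hc0 m)
      (pow_nonneg h1 m)) hfp.le)]
    apply (div_le_div_iff_of_pos_right hfp).mpr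
    have h := mul_le_mul_of_nonneg_right (hc1 m) (pow_nonneg h1 m)
    rwa [one_mul] at h
  have hg : Summable fun k : ℕ => ‖μ ^ k / (k.factorial : ℝ)‖ := by
    apply Summable.of_nonneg_of_le (fun m => norm_nonneg _) _
      (Real.summable_pow_div_factorial μ)
    intro m
    have hfp : (0:ℝ) < m.factorial := by exact_mod_cast m.factorial_pos
    rw [Real.norm_eq_abs, abs_of_nonneg (div_nonneg (pow_nonneg hμ0.le m) hfp.le)]
  have hcauchy := tsum_mul_tsum_eq_tsum_sum_range_of_summable_norm hf hg
  have hBsum : ∑' n, B n = (∑' m : ℕ, c m * l1 ^ m / m.factorial) * Real.exp μ := by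
    rw [exp_eq_tsum_div, hcauchy]
    apply tsum_congr
    intro n
    rw [hBdef]
    rw [← Finset.sum_range_reflect (fun k => c k * l1 ^ k / k.factorial
        * (μ ^ (n - k) / (n - k).factorial)) (n + 1)]
    apply Finset.sum_congr rfl
    intro k hk
    have hkn : k ≤ n := Nat.lt_succ_iff.mp (Finset.mem_range.mp hk)
    have h1 : n + 1 - 1 - k = n - k := by omega
    have h2 : n - (n - k) = k := by omega
    simp only [h1, h2, hwdef]
    ring
  -- assemble
  have hL : Real.exp (-l2) * ∑' m : ℕ, c m * l2 ^ m / m.factorial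
      = Real.exp (-l2) * ∑' n, A n := by
    congr 1
    exact (tsum_congr claimA).symm
  rw [hL]
  calc Real.exp (-l2) * ∑' n, A n < Real.exp (-l2) * ∑' n, B n :=
        mul_lt_mul_of_pos_left hAB (Real.exp_pos _)
    _ = Real.exp (-l1) * ∑' m : ℕ, c m * l1 ^ m / m.factorial := by
        rw [hBsum, ← mul_assoc, mul_comm (Real.exp (-l2)) _, mul_assoc,
          ← Real.exp_add]
        rw [mul_comm]
        congr 2
        simp only [hμdef]
        ring



/-- The `m`-th term of the Bessel series expansion of the noncentral chi-square integrand. -/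
noncomputable def bterm (u : ℝ) (δ : ℝ) (m : ℕ) (x : ℝ) : ℝ :=
  x ^ (u / 2) * Real.exp (-x ^ 2 / 2) *
    ((δ * x / 2) ^ (u / 2 - 1 + 2 * (m : ℝ)) /
      ((m.factorial : ℝ) * Real.Gamma ((m : ℝ) + (u / 2 - 1) + 1)))

lemma gamma_arg (u : ℝ) (m : ℕ) :
    Real.Gamma ((m : ℝ) + (u / 2 - 1) + 1) = Real.Gamma (u / 2 + m) := by
  congr 1; ring

/-- On `Ioc 0 r` the term equals a constant times `x ^ (u - 1 + 2m) * exp (-x²/2)`. -/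
lemma bterm_eq_on {u : ℕ} (hu : 0 < u) {δ : ℝ} (hδ : 0 < δ) (m : ℕ) {x : ℝ} (hx : 0 < x) :
    bterm u δ m x =
      (δ / 2) ^ ((u : ℝ) / 2 - 1 + 2 * (m : ℝ)) /
          ((m.factorial : ℝ) * Real.Gamma ((u : ℝ) / 2 + m)) *
        (x ^ ((u : ℝ) - 1 + 2 * (m : ℝ)) * Real.exp (-x ^ 2 / 2)) := by
  have h1 : δ * x / 2 = (δ / 2) * x := by ring
  rw [bterm, gamma_arg, h1,
    Real.mul_rpow (by positivity) hx.le]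
  have h2 : x ^ ((u : ℝ) / 2) * x ^ ((u : ℝ) / 2 - 1 + 2 * (m : ℝ))
      = x ^ ((u : ℝ) - 1 + 2 * (m : ℝ)) := by
    rw [← Real.rpow_add hx]
    congr 1; ring
  rw [← h2]; ring

/-- The integral of each term. -/
lemma term_integral (u : ℕ) (hu : 0 < u) {δ : ℝ} (hδ : 0 < δ) {r : ℝ} (hr : 0 ≤ r) (m : ℕ) :
    ∫ x in Ioc (0:ℝ) r, bterm u δ m x =
      δ ^ ((u : ℝ) / 2 - 1) * ((δ ^ 2 / 2) ^ m / (m.factorial : ℝ)) *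
        preg ((u : ℝ) / 2 + m) (r ^ 2 / 2) := by
  have ha : (0:ℝ) < (u : ℝ) / 2 + m := by
    have : (1:ℝ) ≤ (u:ℝ) := by exact_mod_cast hu
    positivity
  set a : ℝ := (u : ℝ) / 2 + m with hadef
  -- change of variables x ↦ x²/2
  have hderiv : ∀ x ∈ Ioc (0:ℝ) r,
      HasDerivWithinAt (fun x : ℝ => x ^ 2 / 2) x (Ioc (0:ℝ) r) x := by
    intro x _
    have := (hasDerivAt_pow 2 x).div_const 2
    simpa using this.hasDerivWithinAt
  have hinj : InjOn (fun x : ℝ => x ^ 2 / 2) (Ioc (0:ℝ) r) := by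
    intro x hx y hy hxy
    simp only at hxy
    have hx2 : x ^ 2 = y ^ 2 := by linarith
    calc x = Real.sqrt (x ^ 2) := (Real.sqrt_sq hx.1.le).symm
      _ = Real.sqrt (y ^ 2) := by rw [hx2]
      _ = y := Real.sqrt_sq hy.1.le
  have himg : (fun x : ℝ => x ^ 2 / 2) '' Ioc (0:ℝ) r = Ioc (0:ℝ) (r ^ 2 / 2) := by
    ext y
    constructor
    · rintro ⟨x, hx, rfl⟩
      exact ⟨div_pos (pow_pos hx.1 2) two_pos, by nlinarith [hx.1, hx.2]⟩
    · rintro ⟨hy0, hyr⟩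
      refine ⟨Real.sqrt (2 * y), ⟨Real.sqrt_pos.mpr (by linarith), ?_⟩, ?_⟩
      · have : 2 * y ≤ r ^ 2 := by linarith
        calc Real.sqrt (2 * y) ≤ Real.sqrt (r ^ 2) := Real.sqrt_le_sqrt this
          _ = r := Real.sqrt_sq hr
      · simp only
        rw [Real.sq_sqrt (by linarith)]
        ring
  have hcov := integral_image_eq_integral_abs_deriv_smul measurableSet_Ioc hderiv hinj
    (fun y => y ^ (a - 1) * Real.exp (-y))
  rw [himg] at hcov
  have hlig : lig a (r ^ 2 / 2) = ∫ y in Ioc (0:ℝ) (r ^ 2 / 2), y ^ (a - 1) * Real.exp (-y) := by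
    rw [lig, intervalIntegral.integral_of_le (by positivity)]
  -- rewrite the RHS integrand of hcov
  have hptr : ∀ x ∈ Ioc (0:ℝ) r,
      |x| • ((fun y => y ^ (a - 1) * Real.exp (-y)) (x ^ 2 / 2))
        = (2:ℝ) ^ (-(a - 1)) * (x ^ ((u:ℝ) - 1 + 2 * (m:ℝ)) * Real.exp (-x ^ 2 / 2)) := by
    intro x hx
    have hx0 : 0 < x := hx.1
    simp only [smul_eq_mul, abs_of_pos hx0]
    have e1 : (x ^ 2 / 2 : ℝ) ^ (a - 1) = (x ^ 2 : ℝ) ^ (a - 1) / (2:ℝ) ^ (a - 1) :=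
      Real.div_rpow (by positivity) (by norm_num) _
    have e2 : (x ^ 2 : ℝ) ^ (a - 1) = x ^ (2 * (a - 1)) := by
      rw [← Real.rpow_natCast x 2, ← Real.rpow_mul hx0.le]
      norm_num
    have e3 : x * x ^ (2 * (a - 1)) = x ^ ((u:ℝ) - 1 + 2 * (m:ℝ)) := by
      nth_rewrite 1 [← Real.rpow_one x]
      rw [← Real.rpow_add hx0]
      congr 1
      rw [hadef]; ring
    rw [e1, e2, Real.rpow_neg (by norm_num : (0:ℝ) ≤ 2), ← e3, neg_div]
    ring
  rw [setIntegral_congr_fun measurableSet_Ioc hptr] at hcov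
  rw [integral_const_mul] at hcov
  -- hcov : ∫ Ioc 0 T (y^(a-1)e^-y) = 2^(-(a-1)) * ∫ Ioc 0 r x^b e^{-x²/2}
  have hJ : ∫ x in Ioc (0:ℝ) r, x ^ ((u:ℝ) - 1 + 2 * (m:ℝ)) * Real.exp (-x ^ 2 / 2)
      = (2:ℝ) ^ (a - 1) * lig a (r ^ 2 / 2) := by
    rw [hlig, hcov, ← mul_assoc, ← Real.rpow_add (by norm_num : (0:ℝ) < 2),
      add_neg_cancel, Real.rpow_zero, one_mul]
  -- now the original integral
  have hcong : ∀ x ∈ Ioc (0:ℝ) r, bterm (u:ℝ) δ m x =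
      (δ / 2) ^ ((u : ℝ) / 2 - 1 + 2 * (m : ℝ)) /
          ((m.factorial : ℝ) * Real.Gamma a) *
        (x ^ ((u : ℝ) - 1 + 2 * (m : ℝ)) * Real.exp (-x ^ 2 / 2)) := fun x hx =>
    bterm_eq_on hu hδ m hx.1
  rw [setIntegral_congr_fun measurableSet_Ioc hcong, integral_const_mul, hJ]
  -- constants
  have hgpos : 0 < Real.Gamma a := Real.Gamma_pos_of_pos ha
  have hfpos : (0:ℝ) < (m.factorial : ℝ) := by exact_mod_cast m.factorial_pos
  have hkey : (δ / 2) ^ ((u : ℝ) / 2 - 1 + 2 * (m : ℝ)) * (2:ℝ) ^ (a - 1)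
      = δ ^ ((u : ℝ) / 2 - 1) * (δ ^ 2 / 2) ^ m := by
    rw [Real.div_rpow hδ.le (by norm_num : (0:ℝ) ≤ 2) _]
    have hd1 : δ ^ ((u : ℝ) / 2 - 1 + 2 * (m : ℝ))
        = δ ^ ((u : ℝ) / 2 - 1) * (δ ^ 2) ^ m := by
      rw [Real.rpow_add hδ]
      congr 1
      rw [show (2 * (m:ℝ)) = ((2 * m : ℕ) : ℝ) by push_cast; ring,
        Real.rpow_natCast, pow_mul]
    have hd2 : (2:ℝ) ^ (a - 1) = (2:ℝ) ^ ((u : ℝ) / 2 - 1 + 2 * (m : ℝ)) * (2:ℝ) ^ (-(m:ℝ)) := by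
      rw [← Real.rpow_add (by norm_num : (0:ℝ) < 2)]
      congr 1
      rw [hadef]; ring
    have h2e : ((2:ℝ) ^ ((u : ℝ) / 2 - 1 + 2 * (m : ℝ))) ≠ 0 :=
      (Real.rpow_pos_of_pos (by norm_num) _).ne'
    rw [hd1, hd2]
    have hd3 : (2:ℝ) ^ (-(m:ℝ)) = ((2:ℝ) ^ m)⁻¹ := by
      rw [Real.rpow_neg (by norm_num : (0:ℝ) ≤ 2), Real.rpow_natCast]
    rw [hd3, div_pow]
    field_simp
  rw [preg]
  rw [show (δ / 2) ^ ((u:ℝ)/2 - 1 + 2*(m:ℝ)) / ((m.factorial:ℝ) * Real.Gamma a) *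
      ((2:ℝ) ^ (a-1) * lig a (r^2/2))
    = ((δ / 2) ^ ((u:ℝ)/2 - 1 + 2*(m:ℝ)) * (2:ℝ) ^ (a-1)) *
      (lig a (r^2/2) / ((m.factorial:ℝ) * Real.Gamma a)) from by ring]
  rw [hkey]
  field_simp

lemma bterm_measurable (u : ℕ) (δ : ℝ) (m : ℕ) : Measurable (bterm u δ m) := by
  unfold bterm
  apply Measurable.mul
  · exact (measurable_id.pow_const ((u:ℝ)/2)).mul
      (((measurable_id.pow_const 2).neg.div_const 2).exp)
  · exact ((measurable_id.const_mul δ).div_const 2 |>.pow_const _).div_const _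

lemma bterm_nonneg (u : ℕ) (hu : 0 < u) {δ : ℝ} (hδ : 0 < δ) (m : ℕ) {x : ℝ} (hx : 0 ≤ x) :
    0 ≤ bterm u δ m x := by
  unfold bterm
  rw [gamma_arg]
  have ha : (0:ℝ) < (u:ℝ)/2 + m := by
    have : (1:ℝ) ≤ (u:ℝ) := by exact_mod_cast hu
    positivity
  have h1 : (0:ℝ) ≤ x ^ ((u:ℝ)/2) := Real.rpow_nonneg hx _
  have h2 : (0:ℝ) ≤ (δ * x / 2) ^ ((u:ℝ)/2 - 1 + 2*(m:ℝ)) :=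
    Real.rpow_nonneg (by positivity) _
  have h3 : (0:ℝ) < (m.factorial : ℝ) * Real.Gamma ((u:ℝ)/2 + m) := by
    have hg := Real.Gamma_pos_of_pos ha
    have hfm : (0:ℝ) < (m.factorial:ℝ) := by exact_mod_cast m.factorial_pos
    positivity
  positivity

lemma bterm_integrableOn (u : ℕ) (hu : 0 < u) {δ : ℝ} (hδ : 0 < δ) {r : ℝ} (hr : 0 ≤ r)
    (m : ℕ) : IntegrableOn (bterm u δ m) (Ioc 0 r) volume := by
  have hb : (0:ℝ) ≤ (u:ℝ) - 1 + 2 * (m:ℝ) := by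
    have h1 : (1:ℝ) ≤ (u:ℝ) := by exact_mod_cast hu
    have h2 : (0:ℝ) ≤ (m:ℝ) := Nat.cast_nonneg m
    linarith
  have hcont : Continuous (fun x : ℝ =>
      (δ / 2) ^ ((u : ℝ) / 2 - 1 + 2 * (m : ℝ)) /
          ((m.factorial : ℝ) * Real.Gamma ((u : ℝ) / 2 + m)) *
        (x ^ ((u : ℝ) - 1 + 2 * (m : ℝ)) * Real.exp (-x ^ 2 / 2))) := by
    apply Continuous.mul continuous_const
    apply Continuous.mul _ (Real.continuous_exp.comp (by continuity))
    exact continuous_iff_continuousAt.mpr fun x =>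
      Real.continuousAt_rpow_const x _ (Or.inr hb)
  exact (hcont.integrableOn_Ioc).congr_fun
    (fun x hx => (bterm_eq_on hu hδ m hx.1).symm) measurableSet_Ioc

lemma value_nonneg (u : ℕ) (hu : 0 < u) {δ : ℝ} (hδ : 0 < δ) {T : ℝ} (hT : 0 ≤ T) (m : ℕ) :
    0 ≤ δ ^ ((u:ℝ)/2 - 1) * ((δ^2/2)^m / (m.factorial:ℝ)) * preg ((u:ℝ)/2 + m) T := by
  have ha : (0:ℝ) < (u:ℝ)/2 + m := by
    have : (1:ℝ) ≤ (u:ℝ) := by exact_mod_cast hu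
    positivity
  have h1 : (0:ℝ) ≤ δ ^ ((u:ℝ)/2 - 1) := Real.rpow_nonneg hδ.le _
  have h2 : (0:ℝ) ≤ (δ^2/2)^m / (m.factorial:ℝ) := by positivity
  exact mul_nonneg (mul_nonneg h1 h2) (preg_nonneg ha hT)

lemma summable_value (u : ℕ) (hu : 0 < u) {δ : ℝ} (hδ : 0 < δ) {T : ℝ} (hT : 0 ≤ T) :
    Summable (fun m : ℕ => δ ^ ((u:ℝ)/2 - 1) * ((δ^2/2)^m / (m.factorial:ℝ)) *
      preg ((u:ℝ)/2 + m) T) := by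
  have hle : ∀ m : ℕ, δ ^ ((u:ℝ)/2 - 1) * ((δ^2/2)^m / (m.factorial:ℝ)) *
      preg ((u:ℝ)/2 + m) T ≤ δ ^ ((u:ℝ)/2 - 1) * ((δ^2/2)^m / (m.factorial:ℝ)) := by
    intro m
    have ha : (0:ℝ) < (u:ℝ)/2 + m := by
      have : (1:ℝ) ≤ (u:ℝ) := by exact_mod_cast hu
      positivity
    have h1 : (0:ℝ) ≤ δ ^ ((u:ℝ)/2 - 1) := Real.rpow_nonneg hδ.le _
    have h2 : (0:ℝ) ≤ (δ^2/2)^m / (m.factorial:ℝ) := by positivity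
    calc δ ^ ((u:ℝ)/2 - 1) * ((δ^2/2)^m / (m.factorial:ℝ)) * preg ((u:ℝ)/2 + m) T
        ≤ δ ^ ((u:ℝ)/2 - 1) * ((δ^2/2)^m / (m.factorial:ℝ)) * 1 :=
          mul_le_mul_of_nonneg_left (preg_le_one ha hT) (mul_nonneg h1 h2)
      _ = δ ^ ((u:ℝ)/2 - 1) * ((δ^2/2)^m / (m.factorial:ℝ)) := mul_one _
  have hs : Summable (fun m : ℕ => δ ^ ((u:ℝ)/2 - 1) * ((δ^2/2)^m / (m.factorial:ℝ))) :=
    (Real.summable_pow_div_factorial (δ^2/2)).mul_left _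
  exact Summable.of_nonneg_of_le (value_nonneg u hu hδ hT) hle hs

set_option maxHeartbeats 1000000 in
lemma ncChiSqCDF_eq (u : ℕ) (hu : 0 < u) {δ : ℝ} (hδ : 0 < δ) (t : ℝ) :
    ncChiSqCDF u δ t = Real.exp (-δ^2/2) *
      ∑' m : ℕ, preg ((u:ℝ)/2 + m) (Real.sqrt t ^ 2 / 2) * ((δ^2/2)^m / (m.factorial:ℝ)) := by
  have hr : (0:ℝ) ≤ Real.sqrt t := Real.sqrt_nonneg t
  have hT : (0:ℝ) ≤ Real.sqrt t ^ 2 / 2 := by positivity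
  rw [ncChiSqCDF, intervalIntegral.integral_of_le hr]
  have hpt : ∀ x ∈ Ioc (0:ℝ) (Real.sqrt t),
      x ^ ((u:ℝ)/2) * Real.exp (-x^2/2) * besselI ((u:ℝ)/2 - 1) (δ * x)
        = ∑' m : ℕ, bterm u δ m x := by
    intro x _
    rw [besselI, ← tsum_mul_left]
    rfl
  rw [setIntegral_congr_fun measurableSet_Ioc hpt]
  have hmeas : ∀ m : ℕ, AEStronglyMeasurable (bterm (u:ℝ) δ m)
      (volume.restrict (Ioc (0:ℝ) (Real.sqrt t))) :=
    fun m => (bterm_measurable u δ m).aestronglyMeasurable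
  have heach : ∀ m : ℕ, ∫⁻ x in Ioc (0:ℝ) (Real.sqrt t), ‖bterm (u:ℝ) δ m x‖ₑ ∂volume
      = ENNReal.ofReal (δ ^ ((u:ℝ)/2 - 1) * ((δ^2/2)^m / (m.factorial:ℝ)) *
          preg ((u:ℝ)/2 + m) (Real.sqrt t ^ 2 / 2)) := by
    intro m
    have hnn : 0 ≤ᵐ[volume.restrict (Ioc (0:ℝ) (Real.sqrt t))] bterm (u:ℝ) δ m := by
      filter_upwards [ae_restrict_mem measurableSet_Ioc] with x hx
      exact bterm_nonneg u hu hδ m hx.1.le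
    have h1 : ∫⁻ x in Ioc (0:ℝ) (Real.sqrt t), ‖bterm (u:ℝ) δ m x‖ₑ ∂volume
        = ∫⁻ x in Ioc (0:ℝ) (Real.sqrt t), ENNReal.ofReal (bterm (u:ℝ) δ m x) ∂volume := by
      apply lintegral_congr_ae
      filter_upwards [hnn] with x hx
      exact Real.enorm_eq_ofReal hx
    rw [h1, ← ofReal_integral_eq_lintegral_ofReal (bterm_integrableOn u hu hδ hr m) hnn,
      term_integral u hu hδ hr m]
  rw [MeasureTheory.integral_tsum hmeas (by
    rw [funext heach, ← ENNReal.ofReal_tsum_of_nonneg (value_nonneg u hu hδ hT)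
      (summable_value u hu hδ hT)]
    exact ENNReal.ofReal_ne_top)]
  rw [tsum_congr (fun m => term_integral u hu hδ hr m)]
  rw [tsum_congr (fun m => mul_assoc (δ ^ ((u:ℝ)/2 - 1)) _ _), tsum_mul_left]
  rw [show δ ^ (1 - (u:ℝ)/2) * Real.exp (-δ^2/2) *
      (δ ^ ((u:ℝ)/2 - 1) * ∑' m : ℕ, (δ^2/2)^m / (m.factorial:ℝ) * preg ((u:ℝ)/2 + m)
        (Real.sqrt t ^ 2 / 2))
    = (δ ^ (1 - (u:ℝ)/2) * δ ^ ((u:ℝ)/2 - 1)) * (Real.exp (-δ^2/2) *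
      ∑' m : ℕ, (δ^2/2)^m / (m.factorial:ℝ) * preg ((u:ℝ)/2 + m) (Real.sqrt t ^ 2 / 2))
    from by ring]
  rw [← Real.rpow_add hδ]
  norm_num
  exact tsum_congr fun m => by ring


lemma ha_pos (u : ℕ) (hu : 0 < u) (m : ℕ) : (0:ℝ) < (u:ℝ)/2 + m := by
  have : (1:ℝ) ≤ (u:ℝ) := by exact_mod_cast hu
  positivity

lemma ncChiSqCDF_nonneg (u : ℕ) (hu : 0 < u) {δ : ℝ} (hδ : 0 < δ) (t : ℝ) :
    0 ≤ ncChiSqCDF u δ t := by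
  rw [ncChiSqCDF_eq u hu hδ]
  apply mul_nonneg (Real.exp_pos _).le
  apply tsum_nonneg
  intro m
  have hT : (0:ℝ) ≤ Real.sqrt t ^ 2 / 2 := by positivity
  exact mul_nonneg (preg_nonneg (ha_pos u hu m) hT) (by positivity)

lemma ncChiSqCDF_le_one (u : ℕ) (hu : 0 < u) {δ : ℝ} (hδ : 0 < δ) (t : ℝ) :
    ncChiSqCDF u δ t ≤ 1 := by
  rw [ncChiSqCDF_eq u hu hδ]
  have hT : (0:ℝ) ≤ Real.sqrt t ^ 2 / 2 := by positivity
  have hsum : Summable (fun m : ℕ => (δ^2/2)^m / (m.factorial:ℝ)) :=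
    Real.summable_pow_div_factorial _
  have hterm : ∀ m : ℕ,
      preg ((u:ℝ)/2 + m) (Real.sqrt t ^ 2 / 2) * ((δ^2/2)^m / (m.factorial:ℝ))
        ≤ (δ^2/2)^m / (m.factorial:ℝ) := by
    intro m
    calc preg ((u:ℝ)/2 + m) (Real.sqrt t ^ 2 / 2) * ((δ^2/2)^m / (m.factorial:ℝ))
        ≤ 1 * ((δ^2/2)^m / (m.factorial:ℝ)) :=
          mul_le_mul_of_nonneg_right (preg_le_one (ha_pos u hu m) hT) (by positivity)
      _ = (δ^2/2)^m / (m.factorial:ℝ) := one_mul _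
  have hsum2 : Summable (fun m : ℕ =>
      preg ((u:ℝ)/2 + m) (Real.sqrt t ^ 2 / 2) * ((δ^2/2)^m / (m.factorial:ℝ))) :=
    Summable.of_nonneg_of_le
      (fun m => mul_nonneg (preg_nonneg (ha_pos u hu m) hT) (by positivity)) hterm hsum
  calc Real.exp (-δ^2/2) * ∑' m : ℕ, preg ((u:ℝ)/2 + m) (Real.sqrt t ^ 2 / 2) *
        ((δ^2/2)^m / (m.factorial:ℝ))
      ≤ Real.exp (-δ^2/2) * ∑' m : ℕ, (δ^2/2)^m / (m.factorial:ℝ) :=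
        mul_le_mul_of_nonneg_left (Summable.tsum_le_tsum hterm hsum2 hsum) (Real.exp_pos _).le
    _ = Real.exp (-δ^2/2) * Real.exp (δ^2/2) := by rw [← exp_eq_tsum_div]
    _ = 1 := by rw [← Real.exp_add, show -δ^2/2 + δ^2/2 = 0 by ring, Real.exp_zero]

lemma ncChiSqCDF_zero_of_nonpos (u : ℕ) (hu : 0 < u) {δ : ℝ} (hδ : 0 < δ) {t : ℝ}
    (ht : t ≤ 0) : ncChiSqCDF u δ t = 0 := by
  rw [ncChiSqCDF_eq u hu hδ]
  have hs : Real.sqrt t = 0 := Real.sqrt_eq_zero'.mpr ht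
  rw [hs]
  norm_num [preg_zero]

lemma ncChiSqCDF_strictAnti (u : ℕ) (hu : 0 < u) {δ₁ δ₂ : ℝ} (h1 : 0 < δ₁) (h12 : δ₁ < δ₂)
    {t : ℝ} (ht : 0 < t) :
    ncChiSqCDF u δ₂ t < ncChiSqCDF u δ₁ t := by
  have h2 : 0 < δ₂ := h1.trans h12
  rw [ncChiSqCDF_eq u hu h1, ncChiSqCDF_eq u hu h2]
  have hT : (0:ℝ) < Real.sqrt t ^ 2 / 2 := by
    rw [Real.sq_sqrt ht.le]; linarith
  have hrw : ∀ δ : ℝ, Real.exp (-δ^2/2) *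
      ∑' m : ℕ, preg ((u:ℝ)/2 + m) (Real.sqrt t ^ 2 / 2) * ((δ^2/2)^m / (m.factorial:ℝ))
    = Real.exp (-(δ^2/2)) *
      ∑' m : ℕ, preg ((u:ℝ)/2 + m) (Real.sqrt t ^ 2 / 2) * (δ^2/2)^m / (m.factorial:ℝ) := by
    intro δ
    rw [neg_div]
    congr 1
    exact tsum_congr fun m => (mul_div_assoc _ _ _).symm
  rw [hrw δ₁, hrw δ₂]
  have hsucc : ∀ m : ℕ, preg ((u:ℝ)/2 + (m + 1 : ℕ)) (Real.sqrt t ^ 2 / 2)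
      = preg (((u:ℝ)/2 + m) + 1) (Real.sqrt t ^ 2 / 2) := by
    intro m
    congr 1
    push_cast
    ring
  apply poisson_strictAnti
    (c := fun m => preg ((u:ℝ)/2 + m) (Real.sqrt t ^ 2 / 2))
  · exact fun m => preg_nonneg (ha_pos u hu m) hT.le
  · exact fun m => preg_le_one (ha_pos u hu m) hT.le
  · intro m n hmn
    have := antitone_nat_of_succ_le (f := fun m => preg ((u:ℝ)/2 + m) (Real.sqrt t ^ 2 / 2))
      (fun m => by
        show preg ((u:ℝ)/2 + ((m+1:ℕ):ℝ)) (Real.sqrt t ^ 2 / 2)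
            ≤ preg ((u:ℝ)/2 + (m:ℝ)) (Real.sqrt t ^ 2 / 2)
        rw [hsucc m]
        exact preg_succ_le (ha_pos u hu m) hT.le)
    exact this hmn
  · rw [hsucc 0]
    simp only [Nat.cast_zero, add_zero, Nat.cast_zero]
    have := preg_succ_lt (ha_pos u hu 0) hT
    simpa using this
  · positivity
  · have : δ₁^2 < δ₂^2 := by nlinarith
    linarith

end NCF

/-- For fixed `u`, `v` and `c > 0`, the power `1 - G_{u,v,δ}(c)` of the
F-test is a strictly increasing function of the noncentrality parameter `δ > 0`. -/
theorem power_strictMono_of_noncentrality (u v : ℕ) (hu : 0 < u) (hv : 0 < v)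
    (c : ℝ) (hc : 0 < c) :
    StrictMonoOn (fun δ => 1 - ncFCDF u v δ c) (Set.Ioi 0) := by
  have hvr : (0:ℝ) < (v:ℝ)/2 := by
    have : (1:ℝ) ≤ (v:ℝ) := by exact_mod_cast hv
    linarith
  set μ := ProbabilityTheory.gammaMeasure ((v:ℝ)/2) (1/2) with hμdef
  haveI : IsProbabilityMeasure μ :=
    ProbabilityTheory.isProbabilityMeasure_gammaMeasure hvr (by norm_num)
  have hIic : μ (Iic 0) = 0 := by
    rw [hμdef, ProbabilityTheory.gammaMeasure, withDensity_apply _ measurableSet_Iic]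
    have hsplit : Iic (0:ℝ) = Iio 0 ∪ {0} := by
      ext y; simp [le_iff_lt_or_eq]
    rw [hsplit]
    apply le_antisymm _ zero_le
    calc ∫⁻ x in Iio 0 ∪ {0}, ProbabilityTheory.gammaPDF ((v:ℝ)/2) (1/2) x
        ≤ (∫⁻ x in Iio 0, ProbabilityTheory.gammaPDF ((v:ℝ)/2) (1/2) x)
          + ∫⁻ x in ({0} : Set ℝ), ProbabilityTheory.gammaPDF ((v:ℝ)/2) (1/2) x :=
          lintegral_union_le _ _ _
      _ = 0 := by
          rw [ProbabilityTheory.lintegral_gammaPDF_of_nonpos le_rfl,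
            setLIntegral_measure_zero _ _ (measure_singleton 0), add_zero]
  have hIoi : μ (Ioi 0) = 1 := by
    have h := measure_add_measure_compl (μ := μ) (measurableSet_Ioi (a := (0:ℝ)))
    rw [compl_Ioi, hIic, add_zero] at h
    simpa using h
  -- the integrand as a function of x
  set f : ℝ → ℝ → ℝ := fun δ x => ncChiSqCDF u δ (c * u * x / v) with hfdef
  have hfG : ∀ δ : ℝ, ncFCDF u v δ c = ∫ x, f δ x ∂μ := fun δ => rfl
  -- continuity & integrability
  have hcont : ∀ δ : ℝ, 0 < δ → Continuous (f δ) := by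
    intro δ hδ
    have hfeq : f δ = fun x => Real.exp (-δ^2/2) *
        ∑' m : ℕ, NCF.preg ((u:ℝ)/2 + m) (Real.sqrt (c * u * x / v) ^ 2 / 2) *
          ((δ^2/2)^m / (m.factorial:ℝ)) := by
      funext x
      exact NCF.ncChiSqCDF_eq u hu hδ _
    rw [hfeq]
    apply continuous_const.mul
    have hTcont : Continuous (fun x : ℝ => Real.sqrt (c * u * x / v) ^ 2 / 2) :=
      (((Real.continuous_sqrt.comp (by continuity)).pow 2).div_const 2)
    apply continuous_tsum
    · intro m
      exact (((NCF.continuous_lig (NCF.ha_pos u hu m)).comp hTcont).div_const _).mul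
        continuous_const
    · exact Real.summable_pow_div_factorial (δ^2/2)
    · intro m x
      have hT : (0:ℝ) ≤ Real.sqrt (c * u * x / v) ^ 2 / 2 := by positivity
      rw [Real.norm_eq_abs, abs_of_nonneg (mul_nonneg
        (NCF.preg_nonneg (NCF.ha_pos u hu m) hT) (by positivity))]
      calc NCF.preg ((u:ℝ)/2 + m) (Real.sqrt (c * u * x / v) ^ 2 / 2) *
            ((δ^2/2)^m / (m.factorial:ℝ))
          ≤ 1 * ((δ^2/2)^m / (m.factorial:ℝ)) := mul_le_mul_of_nonneg_right
            (NCF.preg_le_one (NCF.ha_pos u hu m) hT) (by positivity)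
        _ = (δ^2/2)^m / (m.factorial:ℝ) := one_mul _
  have hint : ∀ δ : ℝ, 0 < δ → Integrable (f δ) μ := by
    intro δ hδ
    apply Integrable.mono' (integrable_const (1:ℝ))
      (hcont δ hδ).aestronglyMeasurable
    apply ae_of_all
    intro x
    rw [Real.norm_eq_abs, abs_of_nonneg (NCF.ncChiSqCDF_nonneg u hu hδ _)]
    exact NCF.ncChiSqCDF_le_one u hu hδ _
  -- strict monotonicity
  intro δ₁ h1 δ₂ h2 h12
  simp only [mem_Ioi] at h1 h2
  have hle : ∀ x : ℝ, f δ₂ x ≤ f δ₁ x := by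
    intro x
    rcases le_or_gt x 0 with hx | hx
    · have ht : c * u * x / v ≤ 0 := by
        apply div_nonpos_of_nonpos_of_nonneg _ (by positivity)
        exact mul_nonpos_of_nonneg_of_nonpos (by positivity) hx
      simp only [hfdef]
      rw [NCF.ncChiSqCDF_zero_of_nonpos u hu h1 ht,
        NCF.ncChiSqCDF_zero_of_nonpos u hu (h1.trans h12) ht]
    · have ht : 0 < c * u * x / v := by positivity
      exact (NCF.ncChiSqCDF_strictAnti u hu h1 h12 ht).le
  have hlt : ∀ x : ℝ, 0 < x → f δ₂ x < f δ₁ x := by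
    intro x hx
    have ht : 0 < c * u * x / v := by positivity
    exact NCF.ncChiSqCDF_strictAnti u hu h1 h12 ht
  have hpos : 0 < ∫ x, (f δ₁ x - f δ₂ x) ∂μ := by
    rw [integral_pos_iff_support_of_nonneg (fun x => sub_nonneg.mpr (hle x))
      ((hint δ₁ h1).sub (hint δ₂ (h1.trans h12)))]
    apply lt_of_lt_of_le _ (measure_mono (fun x (hx : x ∈ Ioi 0) => ?_))
    · rw [hIoi]; norm_num
    · exact sub_ne_zero_of_ne (hlt x hx).ne'
  rw [integral_sub (hint δ₁ h1) (hint δ₂ (h1.trans h12))] at hpos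
  have hkey : ncFCDF u v δ₂ c < ncFCDF u v δ₁ c := by
    rw [hfG δ₁, hfG δ₂]
    linarith
  simp only
  linarith
end
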